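/- arXiv:1601.03938 — 8 statements merged into one kernel-verified Lean document; each statement's English description precedes it below -/
import Mathlib

section
/- For all nonnegative integers i, j, k, the product C(k,i)·C(k+i,i)·C(k,j)·C(k+j,j) equals ∑_{r=0}^{i} C(i+j,i)·C(j,i−r)·C(j+r,r)·C(k,j+r)·C(k+j+r,j+r). -/
open Finset

/-- absorption: `(m+1) * C(n, m+1) = (n - m) * C(n, m)` over ℚ with true subtraction. -/
private lemma absq (n m : ℕ) :
    ((m : ℚ) + 1) * (n.choose (m + 1) : ℚ) = ((n : ℚ) - m) * (n.choose m : ℚ) := by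
  rcases le_or_gt m n with h | h
  · have h1 := congrArg (Nat.cast : ℕ → ℚ) (Nat.choose_succ_right_eq n m)
    push_cast [Nat.cast_sub h] at h1
    linarith
  · rw [Nat.choose_eq_zero_of_lt h, Nat.choose_eq_zero_of_lt (by omega)]
    simp

/-- absorption: `(k+1) * C(n+1, k+1) = (n+1) * C(n, k)` over ℚ. -/
private lemma absq2 (n k : ℕ) :
    ((k : ℚ) + 1) * ((n + 1).choose (k + 1) : ℚ) = ((n : ℚ) + 1) * (n.choose k : ℚ) := by
  have h1 := congrArg (Nat.cast : ℕ → ℚ) (Nat.add_one_mul_choose_eq n k)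
  push_cast at h1
  linarith

/-- Zeilberger certificate identity, termwise. -/
private lemma cert (j K i r : ℕ) (h : r ≤ i) :
    ((i : ℚ) + 1 - r) * ((i : ℚ) + j + r + 1)
        * ((j.choose (i + 1 - r) * (K + j + r).choose r * K.choose (j + r) : ℕ) : ℚ)
      + ((r : ℚ) + 1) * ((r : ℚ) + j + 1)
        * ((j.choose (i - r) * (K + j + r + 1).choose (r + 1) * K.choose (j + r + 1) : ℕ) : ℚ)
      = ((K : ℚ) - i) * ((K : ℚ) + i + 1)
        * ((j.choose (i - r) * (K + j + r).choose r * K.choose (j + r) : ℕ) : ℚ) := by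
  obtain ⟨m, rfl⟩ : ∃ m, i = m + r := ⟨i - r, by omega⟩
  rw [show m + r + 1 - r = m + 1 from by omega, show m + r - r = m from by omega]
  have e1 := absq j m
  have e2 := absq2 (K + j + r) r
  have e3 := absq K (j + r)
  push_cast at e1 e2 e3 ⊢
  linear_combination ((m : ℚ) + 2 * r + j + 1) * (((K + j + r).choose r : ℚ)
        * (K.choose (j + r) : ℚ)) * e1
    + ((r : ℚ) + j + 1) * ((j.choose m : ℚ) * (K.choose (j + r + 1) : ℚ)) * e2
    + ((K : ℚ) + j + r + 1) * ((j.choose m : ℚ) * (((K + j + r).choose r : ℚ))) * e3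

/-- The key Saalschütz-type identity, rational version. -/
private lemma keyQ (j K : ℕ) : ∀ i : ℕ,
    (∑ r ∈ range (i + 1),
        ((j.choose (i - r) * (K + j + r).choose r * K.choose (j + r) : ℕ) : ℚ))
      = (K.choose i : ℚ) * ((K + i).choose (i + j) : ℚ)
  | 0 => by simp
  | (i + 1) => by
    have IH := keyQ j K i
    set T : ℕ → ℕ → ℚ :=
      fun a r => ((j.choose (a - r) * (K + j + r).choose r * K.choose (j + r) : ℕ) : ℚ) with hT
    -- sum the certificate over r ∈ range (i+1)
    have step1 :
        (∑ r ∈ range (i + 1),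
            (((i : ℚ) + 1 - r) * ((i : ℚ) + j + r + 1) * T (i + 1) r
              + ((r : ℚ) + 1) * ((r : ℚ) + j + 1) * T (i + 1) (r + 1)))
          = ((K : ℚ) - i) * ((K : ℚ) + i + 1) * ∑ r ∈ range (i + 1), T i r := by
      rw [Finset.mul_sum]
      refine Finset.sum_congr rfl fun r hr => ?_
      have hri : r ≤ i := by simpa using Nat.lt_succ_iff.mp (Finset.mem_range.mp hr)
      have hc := cert j K i r hri
      have hTa : T (i + 1) r
          = ((j.choose (i + 1 - r) * (K + j + r).choose r * K.choose (j + r) : ℕ) : ℚ) := rfl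
      have hTb : T (i + 1) (r + 1)
          = ((j.choose (i - r) * (K + j + r + 1).choose (r + 1)
              * K.choose (j + r + 1) : ℕ) : ℚ) := by
        simp only [hT, Nat.succ_sub_succ]
        norm_num [show K + j + (r + 1) = K + j + r + 1 from by omega,
          show j + (r + 1) = j + r + 1 from by omega]
      rw [hTa, hTb]
      exact hc
    -- rewrite the left side of step1 as (i+1)(i+j+1) * S(i+1)
    have step2 :
        (∑ r ∈ range (i + 1),
            (((i : ℚ) + 1 - r) * ((i : ℚ) + j + r + 1) * T (i + 1) r
              + ((r : ℚ) + 1) * ((r : ℚ) + j + 1) * T (i + 1) (r + 1)))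
          = ((i : ℚ) + 1) * ((i : ℚ) + j + 1) * ∑ r ∈ range (i + 2), T (i + 1) r := by
      rw [Finset.sum_add_distrib]
      have hA : (∑ r ∈ range (i + 1),
            ((i : ℚ) + 1 - r) * ((i : ℚ) + j + r + 1) * T (i + 1) r)
          = ∑ r ∈ range (i + 2),
            ((i : ℚ) + 1 - r) * ((i : ℚ) + j + r + 1) * T (i + 1) r := by
        rw [Finset.sum_range_succ ((fun r => ((i : ℚ) + 1 - r) * ((i : ℚ) + j + r + 1)
          * T (i + 1) r)) (i + 1)]
        push_cast
        ring
      have hB : (∑ r ∈ range (i + 1),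
            ((r : ℚ) + 1) * ((r : ℚ) + j + 1) * T (i + 1) (r + 1))
          = ∑ r ∈ range (i + 2), (r : ℚ) * ((r : ℚ) + j) * T (i + 1) r := by
        rw [Finset.sum_range_succ' (fun r => (r : ℚ) * ((r : ℚ) + j) * T (i + 1) r) (i + 1)]
        norm_num
        refine Finset.sum_congr rfl fun r _ => ?_
        push_cast
        ring
      rw [hA, hB, ← Finset.sum_add_distrib, Finset.mul_sum]
      refine Finset.sum_congr rfl fun r _ => ?_
      ring
    have hfin : ((i : ℚ) + 1) * ((i : ℚ) + j + 1) * ∑ r ∈ range (i + 2), T (i + 1) r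
        = ((i : ℚ) + 1) * ((i : ℚ) + j + 1)
          * ((K.choose (i + 1) : ℚ) * ((K + (i + 1)).choose ((i + 1) + j) : ℚ)) := by
      rw [← step2, step1, IH]
      have e1 := absq K i
      have e2 := absq2 (K + i) (i + j)
      rw [show K + (i + 1) = (K + i) + 1 from by omega,
        show (i + 1) + j = (i + j) + 1 from by omega]
      push_cast at e1 e2 ⊢
      linear_combination (-(((K : ℚ) + i + 1) * (((K + i).choose (i + j) : ℚ)))) * e1
        - ((i : ℚ) + 1) * ((K.choose (i + 1) : ℚ)) * e2
    have hne : ((i : ℚ) + 1) * ((i : ℚ) + j + 1) ≠ 0 := by positivity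
    exact mul_left_cancel₀ hne hfin

/-- The key Saalschütz-type identity over ℕ. -/
private lemma keyN (j K i : ℕ) :
    (∑ r ∈ range (i + 1), j.choose (i - r) * (K + j + r).choose r * K.choose (j + r))
      = K.choose i * (K + i).choose (i + j) := by
  have h := keyQ j K i
  have : ((∑ r ∈ range (i + 1),
      j.choose (i - r) * (K + j + r).choose r * K.choose (j + r) : ℕ) : ℚ)
      = ((K.choose i * (K + i).choose (i + j) : ℕ) : ℚ) := by
    push_cast
    push_cast at h
    exact h
  exact_mod_cast this

theorem choose_prod_eq_sum_r (i j k : ℕ) :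
    k.choose i * (k + i).choose i * k.choose j * (k + j).choose j
      = ∑ r ∈ Finset.range (i + 1),
          (i + j).choose i * j.choose (i - r) * (j + r).choose r
            * k.choose (j + r) * (k + j + r).choose (j + r) := by
  have h1 : ∀ r ∈ range (i + 1),
      (i + j).choose i * j.choose (i - r) * (j + r).choose r
          * k.choose (j + r) * (k + j + r).choose (j + r)
        = ((i + j).choose i * (k + j).choose j)
          * (j.choose (i - r) * (k + j + r).choose r * k.choose (j + r)) := by
    intro r _
    have h2 : (k + j + r).choose (j + r) * (j + r).choose r
        = (k + j + r).choose r * (k + j).choose j := by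
      have := Nat.choose_mul (n := k + j + r) (show r ≤ j + r by omega)
      simpa [show k + j + r - r = k + j from by omega, show j + r - r = j from by omega]
        using this
    calc (i + j).choose i * j.choose (i - r) * (j + r).choose r
          * k.choose (j + r) * (k + j + r).choose (j + r)
        = (i + j).choose i * j.choose (i - r) * k.choose (j + r)
            * ((k + j + r).choose (j + r) * (j + r).choose r) := by ring
      _ = (i + j).choose i * j.choose (i - r) * k.choose (j + r)
            * ((k + j + r).choose r * (k + j).choose j) := by rw [h2]
      _ = ((i + j).choose i * (k + j).choose j)
            * (j.choose (i - r) * (k + j + r).choose r * k.choose (j + r)) := by ring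
  rw [Finset.sum_congr rfl h1, ← Finset.mul_sum, keyN j k i]
  rcases le_or_gt j k with h | h
  · have h3 := Nat.choose_mul (n := k + i) (show i ≤ i + j by omega)
    rw [show k + i - i = k from by omega, show i + j - i = j from by omega] at h3
    calc k.choose i * (k + i).choose i * k.choose j * (k + j).choose j
        = ((k + i).choose i * k.choose j) * (k.choose i * (k + j).choose j) := by ring
      _ = ((k + i).choose (i + j) * (i + j).choose i) * (k.choose i * (k + j).choose j) := by
          rw [h3]
      _ = (i + j).choose i * (k + j).choose j * (k.choose i * (k + i).choose (i + j)) := by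
          ring
  · rw [Nat.choose_eq_zero_of_lt h, Nat.choose_eq_zero_of_lt (show k + i < i + j by omega)]
    simp
end

section
/- For all nonnegative integers i, j, k, the product C(k,i)·C(k+i,i)·C(k,j)·C(k+j,j) equals ∑_{s=max(i,j)}^{i+j} C(s,i)·C(s,j)·C(i+j,s)·C(k,s)·C(k+s,s). -/
open Finset Nat

lemma chq (m r : ℕ) : (((m+r).choose r : ℚ)) = ((m+r)! : ℚ) / (m ! * r !) := by
  rw [Nat.cast_choose ℚ (Nat.le_add_left r m), Nat.add_sub_cancel]
  ring

lemma chq' (m r : ℕ) : (((m+r).choose m : ℚ)) = ((m+r)! : ℚ) / (m ! * r !) := by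
  rw [Nat.choose_symm_add, chq]

lemma certGeneric (x y s : ℕ) :
    ((2*s+x+y+4)+(s+1)).choose (2*s+x+y+4) * (((x+1)+(s+1)).choose (s+1) * ((y+1)+(s+1)).choose (s+1))
      + ((2*s+x+y+4)+(s+2)).choose (2*s+x+y+4) * ((x+(s+1)).choose (s+1) * (y+(s+1)).choose (s+1))
    = ((2*s+x+y+4)+(s+1)).choose (2*s+x+y+4) * (((x+1)+(s+2)).choose (s+2) * (y+(s+1)).choose (s+1))
      + ((2*s+x+y+4)+(s+1)).choose (2*s+x+y+4) * ((x+(s+1)).choose (s+1) * ((y+1)+(s+2)).choose (s+2))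
      + ((2*s+x+y+4)+(s+1)).choose (2*s+x+y+4) * (((x+1)+s).choose s * ((y+1)+s).choose s) := by
  have H : (((2*s+x+y+4)+(s+1)).choose (2*s+x+y+4) * (((x+1)+(s+1)).choose (s+1) * ((y+1)+(s+1)).choose (s+1))
      + ((2*s+x+y+4)+(s+2)).choose (2*s+x+y+4) * ((x+(s+1)).choose (s+1) * (y+(s+1)).choose (s+1)) : ℚ)
    = ((2*s+x+y+4)+(s+1)).choose (2*s+x+y+4) * (((x+1)+(s+2)).choose (s+2) * (y+(s+1)).choose (s+1))
      + ((2*s+x+y+4)+(s+1)).choose (2*s+x+y+4) * ((x+(s+1)).choose (s+1) * ((y+1)+(s+2)).choose (s+2))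
      + ((2*s+x+y+4)+(s+1)).choose (2*s+x+y+4) * (((x+1)+s).choose s * ((y+1)+s).choose s) := by
    rw [chq' (2*s+x+y+4) (s+1), chq' (2*s+x+y+4) (s+2),
        chq (x+1) (s+1), chq (y+1) (s+1), chq x (s+1), chq y (s+1),
        chq (x+1) (s+2), chq (y+1) (s+2), chq (x+1) s, chq (y+1) s]
    have fx2 : (((x+1)+(s+1))! : ℚ) = (s+x+2) * (x+(s+1))! := by
      rw [show (x+1)+(s+1) = (x+(s+1))+1 by ring, Nat.factorial_succ]; push_cast; ring
    have fy2 : (((y+1)+(s+1))! : ℚ) = (s+y+2) * (y+(s+1))! := by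
      rw [show (y+1)+(s+1) = (y+(s+1))+1 by ring, Nat.factorial_succ]; push_cast; ring
    have fx3 : (((x+1)+(s+2))! : ℚ) = (s+x+3)*((s+x+2) * (x+(s+1))!) := by
      rw [show (x+1)+(s+2) = ((x+(s+1))+1)+1 by ring, Nat.factorial_succ, Nat.factorial_succ]
      push_cast; ring
    have fy3 : (((y+1)+(s+2))! : ℚ) = (s+y+3)*((s+y+2) * (y+(s+1))!) := by
      rw [show (y+1)+(s+2) = ((y+(s+1))+1)+1 by ring, Nat.factorial_succ, Nat.factorial_succ]
      push_cast; ring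
    have fx0 : (((x+1)+s)! : ℚ) = ((x+(s+1))! : ℚ) := by
      rw [show (x+1)+s = x+(s+1) by ring]
    have fy0 : (((y+1)+s)! : ℚ) = ((y+(s+1))! : ℚ) := by
      rw [show (y+1)+s = y+(s+1) by ring]
    have fW : (((2*s+x+y+4)+(s+2))! : ℚ) = (3*s+x+y+6) * ((2*s+x+y+4)+(s+1))! := by
      rw [show (2*s+x+y+4)+(s+2) = ((2*s+x+y+4)+(s+1))+1 by ring, Nat.factorial_succ]
      push_cast; ring
    have fxp : ((x+1)! : ℚ) = (x+1) * x ! := by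
      rw [Nat.factorial_succ]; push_cast; ring
    have fyp : ((y+1)! : ℚ) = (y+1) * y ! := by
      rw [Nat.factorial_succ]; push_cast; ring
    have fs1 : ((s+1)! : ℚ) = (s+1) * s ! := by
      rw [Nat.factorial_succ]; push_cast; ring
    have fs2 : ((s+2)! : ℚ) = (s+2)*((s+1) * s !) := by
      rw [show s+2 = (s+1)+1 from rfl, Nat.factorial_succ, Nat.factorial_succ]; push_cast; ring
    rw [fx2, fy2, fx3, fy3, fx0, fy0, fW, fxp, fyp, fs1, fs2]
    have h1 : ((x+(s+1))! : ℚ) ≠ 0 := by positivity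
    have h2 : ((y+(s+1))! : ℚ) ≠ 0 := by positivity
    have h3 : (((2*s+x+y+4)+(s+1))! : ℚ) ≠ 0 := by positivity
    have h4 : (x ! : ℚ) ≠ 0 := by positivity
    have h5 : (y ! : ℚ) ≠ 0 := by positivity
    have h6 : (s ! : ℚ) ≠ 0 := by positivity
    field_simp
    ring
  exact_mod_cast H

lemma certLem (a b s N : ℕ) (hN : N = a + b) :
    (N+3+s).choose (N+2) * ((a+1).choose (s+1) * (b+1).choose (s+1))
      + (N+4+s).choose (N+2) * (a.choose (s+1) * b.choose (s+1))
    = (N+3+s).choose (N+2) * ((a+2).choose (s+2) * b.choose (s+1))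
      + (N+3+s).choose (N+2) * (a.choose (s+1) * (b+2).choose (s+2))
      + (N+3+s).choose (N+2) * (a.choose s * b.choose s) := by
  rcases lt_or_ge a s with ha | ha
  · have e1 : (a+1).choose (s+1) = 0 := Nat.choose_eq_zero_of_lt (by omega)
    have e2 : a.choose (s+1) = 0 := Nat.choose_eq_zero_of_lt (by omega)
    have e3 : (a+2).choose (s+2) = 0 := Nat.choose_eq_zero_of_lt (by omega)
    have e4 : a.choose s = 0 := Nat.choose_eq_zero_of_lt (by omega)
    rw [e1, e2, e3, e4]; ring
  rcases lt_or_ge b s with hb | hb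
  · have e1 : (b+1).choose (s+1) = 0 := Nat.choose_eq_zero_of_lt (by omega)
    have e2 : b.choose (s+1) = 0 := Nat.choose_eq_zero_of_lt (by omega)
    have e3 : (b+2).choose (s+2) = 0 := Nat.choose_eq_zero_of_lt (by omega)
    have e4 : b.choose s = 0 := Nat.choose_eq_zero_of_lt (by omega)
    rw [e1, e2, e3, e4]; ring
  rcases eq_or_lt_of_le ha with rfl | ha'
  · -- s = a
    have e2 : s.choose (s+1) = 0 := Nat.choose_eq_zero_of_lt (by omega)
    have e1 : (s+1).choose (s+1) = 1 := Nat.choose_self _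
    have e3 : (s+2).choose (s+2) = 1 := Nat.choose_self _
    have e4 : s.choose s = 1 := Nat.choose_self _
    rw [e1, e2, e3, e4, Nat.choose_succ_succ' b s]
    ring
  rcases eq_or_lt_of_le hb with rfl | hb'
  · have e2 : s.choose (s+1) = 0 := Nat.choose_eq_zero_of_lt (by omega)
    have e1 : (s+1).choose (s+1) = 1 := Nat.choose_self _
    have e3 : (s+2).choose (s+2) = 1 := Nat.choose_self _
    have e4 : s.choose s = 1 := Nat.choose_self _
    rw [e1, e2, e3, e4, Nat.choose_succ_succ' a s]
    ring
  · -- s < a, s < b : generic case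
    obtain ⟨x, rfl⟩ : ∃ x, a = x + (s+1) := ⟨a - (s+1), by omega⟩
    obtain ⟨y, rfl⟩ : ∃ y, b = y + (s+1) := ⟨b - (s+1), by omega⟩
    subst hN
    have H := certGeneric x y s
    ring_nf at H ⊢
    exact H

def psTerm (p q a b t : ℕ) : ℕ :=
  (p+q+a+b+t).choose (p+q+a+b) * ((q+a).choose (q+t) * (p+b).choose (p+t))

def psSum (p q a b : ℕ) : ℕ := ∑ t ∈ Finset.range (a+1), psTerm p q a b t

lemma psSum_eq (p q a b M : ℕ) (hM : M = p+q+a+b) :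
    psSum p q a b
      = ∑ t ∈ Finset.range (a+1),
          (M+t).choose M * ((q+a).choose (q+t) * (p+b).choose (p+t)) := by
  subst hM; rfl

lemma term1 (p q a b t N : ℕ) :
    (N+3+t).choose (N+3) * ((q+1+(a+1)).choose (q+1+t) * (p+(b+1)).choose (p+t))
    = (N+2+t).choose (N+2) * ((q+(a+1)).choose (q+t) * (p+(b+1)).choose (p+t))
    + (N+2+t).choose (N+2) * ((q+1+a).choose (q+1+t) * (p+(b+1)).choose (p+t))
    + (N+2+t).choose (N+3) * ((q+1+(a+1)).choose (q+1+t) * (p+(b+1)).choose (p+t)) := by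
  have P1 : (N+3+t).choose (N+3) = (N+2+t).choose (N+2) + (N+2+t).choose (N+3) := by
    rw [show N+3+t = (N+2+t)+1 by ring]
    rw [show N+3 = (N+2)+1 from rfl]
    rw [Nat.choose_succ_succ']
  have P2 : (q+1+(a+1)).choose (q+1+t)
      = (q+(a+1)).choose (q+t) + (q+1+a).choose (q+1+t) := by
    rw [show q+1+(a+1) = (q+(a+1))+1 by ring, show q+1+t = (q+t)+1 by ring,
      Nat.choose_succ_succ']
    congr 2 <;> omega
  calc (N+3+t).choose (N+3) * ((q+1+(a+1)).choose (q+1+t) * (p+(b+1)).choose (p+t))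
      = ((N+2+t).choose (N+2) + (N+2+t).choose (N+3)) *
          (((q+(a+1)).choose (q+t) + (q+1+a).choose (q+1+t)) * (p+(b+1)).choose (p+t)) := by
        rw [← P1, ← P2]
    _ = _ := by rw [P2]; ring

lemma psSum_rec1 (p q a b : ℕ) :
    psSum p (q+1) (a+1) (b+1) =
      psSum p q (a+1) (b+1) + psSum p (q+1) a (b+1) + psSum (p+1) (q+2) a b := by
  set N := p+q+a+b with hN
  rw [psSum_eq p (q+1) (a+1) (b+1) (N+3) (by omega),
      psSum_eq p q (a+1) (b+1) (N+2) (by omega),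
      psSum_eq p (q+1) a (b+1) (N+2) (by omega),
      psSum_eq (p+1) (q+2) a b (N+3) (by omega)]
  -- extend middle sum to range (a+2)
  have hR2 : ∑ t ∈ Finset.range (a+1+1),
        (N+2+t).choose (N+2) * ((q+1+a).choose (q+1+t) * (p+(b+1)).choose (p+t))
      = ∑ t ∈ Finset.range (a+1),
        (N+2+t).choose (N+2) * ((q+1+a).choose (q+1+t) * (p+(b+1)).choose (p+t)) := by
    rw [Finset.sum_range_succ]
    have : (q+1+a).choose (q+1+(a+1)) = 0 := Nat.choose_eq_zero_of_lt (by omega)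
    rw [this]
    simp
  -- z-sum equals third sum
  have hR3 : ∑ t ∈ Finset.range (a+1+1),
        (N+2+t).choose (N+3) * ((q+1+(a+1)).choose (q+1+t) * (p+(b+1)).choose (p+t))
      = ∑ t ∈ Finset.range (a+1),
        (N+3+t).choose (N+3) * ((q+2+a).choose (q+2+t) * ((p+1)+b).choose ((p+1)+t)) := by
    rw [Finset.sum_range_succ']
    have h0 : (N+2+0).choose (N+3) = 0 := Nat.choose_eq_zero_of_lt (by omega)
    rw [h0]
    simp only [Nat.zero_add, Nat.mul_zero, Nat.zero_mul, Nat.add_zero]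
    apply Finset.sum_congr rfl
    intro t _
    congr 1 <;> [skip; congr 1] <;> congr 1 <;> omega
  rw [← hR2, ← hR3, ← Finset.sum_add_distrib, ← Finset.sum_add_distrib]
  exact Finset.sum_congr rfl fun t _ => term1 p q a b t N

lemma tele (L R z : ℕ → ℕ) (n : ℕ)
    (h : ∀ t, t < n → L t + z (t+1) = R t + z t)
    (h0 : z 0 = 0) (hn : z n = 0) :
    ∑ t ∈ Finset.range n, L t = ∑ t ∈ Finset.range n, R t := by
  have key : ∀ m, m ≤ n →
      (∑ t ∈ Finset.range m, L t) + z m = (∑ t ∈ Finset.range m, R t) + z 0 := by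
    intro m hm
    induction m with
    | zero => simp
    | succ d ih =>
      rw [Finset.sum_range_succ, Finset.sum_range_succ]
      have h1 := h d (by omega)
      have h2 := ih (by omega)
      omega
  have := key n le_rfl
  omega

lemma psSum_rec3 (a b : ℕ) :
    psSum 0 0 (a+1) (b+1) = psSum 0 1 (a+1) b + psSum 1 0 a (b+1) := by
  set N := a + b with hN
  rw [psSum_eq 0 0 (a+1) (b+1) (N+2) (by omega),
      psSum_eq 0 1 (a+1) b (N+2) (by omega),
      psSum_eq 1 0 a (b+1) (N+2) (by omega)]
  have hRh : ∑ t ∈ Finset.range (a+1+1),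
        (N+2+t).choose (N+2) * ((0+a).choose (0+t) * (1+(b+1)).choose (1+t))
      = ∑ t ∈ Finset.range (a+1),
        (N+2+t).choose (N+2) * ((0+a).choose (0+t) * (1+(b+1)).choose (1+t)) := by
    rw [Finset.sum_range_succ]
    have h0 : (0+a).choose (0+(a+1)) = 0 := Nat.choose_eq_zero_of_lt (by omega)
    rw [h0]
    simp
  rw [← hRh, ← Finset.sum_add_distrib]
  refine tele _ _
    (fun t => match t with
      | 0 => 0
      | s+1 => (N+3+s).choose (N+2) * (a.choose s * b.choose s)) (a+1+1) ?_ rfl ?_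
  · intro t _
    match t with
    | 0 =>
      show (N+2+0).choose (N+2) * ((0+(a+1)).choose (0+0) * (0+(b+1)).choose (0+0))
          + (N+3+0).choose (N+2) * (a.choose 0 * b.choose 0)
        = ((N+2+0).choose (N+2) * ((1+(a+1)).choose (1+0) * (0+b).choose (0+0))
          + (N+2+0).choose (N+2) * ((0+a).choose (0+0) * (1+(b+1)).choose (1+0))) + 0
      simp [Nat.choose_one_right, Nat.choose_self, Nat.choose_zero_right,
        Nat.choose_succ_self_right]
      omega
    | s+1 =>
      show (N+2+(s+1)).choose (N+2) * ((0+(a+1)).choose (0+(s+1)) * (0+(b+1)).choose (0+(s+1)))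
          + (N+3+(s+1)).choose (N+2) * (a.choose (s+1) * b.choose (s+1))
        = ((N+2+(s+1)).choose (N+2) * ((1+(a+1)).choose (1+(s+1)) * (0+b).choose (0+(s+1)))
          + (N+2+(s+1)).choose (N+2) * ((0+a).choose (0+(s+1)) * (1+(b+1)).choose (1+(s+1))))
          + (N+3+s).choose (N+2) * (a.choose s * b.choose s)
      have H := certLem a b s N hN
      simp only [show N+2+(s+1) = N+3+s from by omega,
        show N+3+(s+1) = N+4+s from by omega,
        show (0:ℕ)+(a+1) = a+1 from by omega,
        show (0:ℕ)+(b+1) = b+1 from by omega,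
        show (0:ℕ)+(s+1) = s+1 from by omega,
        show (1:ℕ)+(a+1) = a+2 from by omega,
        show (1:ℕ)+(b+1) = b+2 from by omega,
        show (1:ℕ)+(s+1) = s+2 from by omega,
        show (0:ℕ)+a = a from by omega,
        show (0:ℕ)+b = b from by omega]
      omega
  · show (N+3+(a+1)).choose (N+2) * (a.choose (a+1) * b.choose (a+1)) = 0
    have h0 : a.choose (a+1) = 0 := Nat.choose_eq_zero_of_lt (by omega)
    rw [h0]
    ring

lemma term2 (p q a b t N : ℕ) :
    (N+3+t).choose (N+3) * ((q+(a+1)).choose (q+t) * (p+1+(b+1)).choose (p+1+t))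
    = (N+2+t).choose (N+2) * ((q+(a+1)).choose (q+t) * (p+(b+1)).choose (p+t))
    + (N+2+t).choose (N+2) * ((q+(a+1)).choose (q+t) * (p+1+b).choose (p+1+t))
    + (N+2+t).choose (N+3) * ((q+(a+1)).choose (q+t) * (p+1+(b+1)).choose (p+1+t)) := by
  have P1 : (N+3+t).choose (N+3) = (N+2+t).choose (N+2) + (N+2+t).choose (N+3) := by
    rw [show N+3+t = (N+2+t)+1 by ring]
    rw [show N+3 = (N+2)+1 from rfl]
    rw [Nat.choose_succ_succ']
  have P3 : (p+1+(b+1)).choose (p+1+t)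
      = (p+(b+1)).choose (p+t) + (p+1+b).choose (p+1+t) := by
    rw [show p+1+(b+1) = (p+(b+1))+1 by ring, show p+1+t = (p+t)+1 by ring,
      Nat.choose_succ_succ']
    congr 2 <;> omega
  calc (N+3+t).choose (N+3) * ((q+(a+1)).choose (q+t) * (p+1+(b+1)).choose (p+1+t))
      = ((N+2+t).choose (N+2) + (N+2+t).choose (N+3)) *
          ((q+(a+1)).choose (q+t) *
            ((p+(b+1)).choose (p+t) + (p+1+b).choose (p+1+t))) := by
        rw [← P1, ← P3]
    _ = _ := by rw [P3]; ring

lemma psSum_rec2 (p q a b : ℕ) :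
    psSum (p+1) q (a+1) (b+1) =
      psSum p q (a+1) (b+1) + psSum (p+1) q (a+1) b + psSum (p+2) (q+1) a b := by
  set N := p+q+a+b with hN
  rw [psSum_eq (p+1) q (a+1) (b+1) (N+3) (by omega),
      psSum_eq p q (a+1) (b+1) (N+2) (by omega),
      psSum_eq (p+1) q (a+1) b (N+2) (by omega),
      psSum_eq (p+2) (q+1) a b (N+3) (by omega)]
  have hR3 : ∑ t ∈ Finset.range (a+1+1),
        (N+2+t).choose (N+3) * ((q+(a+1)).choose (q+t) * (p+1+(b+1)).choose (p+1+t))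
      = ∑ t ∈ Finset.range (a+1),
        (N+3+t).choose (N+3) * ((q+1+a).choose (q+1+t) * ((p+2)+b).choose ((p+2)+t)) := by
    rw [Finset.sum_range_succ']
    have h0 : (N+2+0).choose (N+3) = 0 := Nat.choose_eq_zero_of_lt (by omega)
    rw [h0]
    simp only [Nat.zero_add, Nat.mul_zero, Nat.zero_mul, Nat.add_zero]
    apply Finset.sum_congr rfl
    intro t _
    congr 1 <;> [skip; congr 1] <;> congr 1 <;> omega
  rw [← hR3, ← Finset.sum_add_distrib, ← Finset.sum_add_distrib]
  exact Finset.sum_congr rfl fun t _ => term2 p q a b t N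

lemma psSum_a0 (p q b : ℕ) : psSum p q 0 b = (p+0+b).choose b * (q+0+b).choose 0 := by
  unfold psSum psTerm
  rw [Finset.sum_range_one]
  simp only [Nat.add_zero, Nat.choose_self, Nat.choose_zero_right, Nat.one_mul, Nat.mul_one]
  exact Nat.choose_symm_add

lemma psSum_b0 (p q a : ℕ) : psSum p q a 0 = (p+a+0).choose 0 * (q+a+0).choose a := by
  unfold psSum psTerm
  rw [Finset.sum_eq_single_of_mem 0 (Finset.mem_range.mpr (by omega))]
  · simp only [Nat.add_zero, Nat.choose_self, Nat.choose_zero_right, Nat.one_mul, Nat.mul_one]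
    exact Nat.choose_symm_add
  · intro t _ ht
    have : (p+0).choose (p+t) = 0 := Nat.choose_eq_zero_of_lt (by omega)
    rw [this]
    ring

lemma psSum_closed (p q a b : ℕ) :
    psSum p q a b = (p+a+b).choose b * (q+a+b).choose a := by
  suffices H : ∀ n p q a b, p+q+2*(a+b) ≤ n →
      psSum p q a b = (p+a+b).choose b * (q+a+b).choose a from
    H (p+q+2*(a+b)) p q a b le_rfl
  intro n
  induction n with
  | zero =>
    intro p q a b h
    obtain rfl : a = 0 := by omega
    exact psSum_a0 p q b
  | succ n ih =>
    intro p q a b h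
    rcases a with _ | a
    · exact psSum_a0 p q b
    rcases b with _ | b
    · exact psSum_b0 p q (a+1)
    rcases q with _ | q
    · rcases p with _ | p
      · -- rec3
        rw [psSum_rec3 a b, ih 0 1 (a+1) b (by omega), ih 1 0 a (b+1) (by omega)]
        simp only [show (0:ℕ)+(a+1)+b = (a+1)+b from by omega,
          show (1:ℕ)+(a+1)+b = ((a+1)+b)+1 from by omega,
          show (1:ℕ)+a+(b+1) = ((a+1)+b)+1 from by omega,
          show (0:ℕ)+a+(b+1) = (a+1)+b from by omega,
          show (0:ℕ)+(a+1)+(b+1) = ((a+1)+b)+1 from by omega]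
        have e1 : ((a+1)+b).choose b = ((a+1)+b).choose (a+1) :=
          Nat.choose_symm_add.symm
        have e2 : (((a+1)+b)+1).choose (b+1) = (((a+1)+b)+1).choose (a+1) := by
          rw [show ((a+1)+b)+1 = (a+1)+(b+1) from by omega]
          exact Nat.choose_symm_add.symm
        rw [e1, e2, Nat.choose_succ_succ' ((a+1)+b) a]
        ring
      · -- rec2
        rw [psSum_rec2 p 0 a b, ih p 0 (a+1) (b+1) (by omega),
          ih (p+1) 0 (a+1) b (by omega), ih (p+2) 1 a b (by omega)]
        simp only [show p+(a+1)+(b+1) = p+a+b+2 from by omega,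
          show (p+1)+(a+1)+b = p+a+b+2 from by omega,
          show (p+2)+a+b = p+a+b+2 from by omega,
          show (p+1)+(a+1)+(b+1) = (p+a+b+2)+1 from by omega,
          show (0:ℕ)+(a+1)+(b+1) = (a+b+1)+1 from by omega,
          show (0:ℕ)+(a+1)+b = a+b+1 from by omega,
          show (1:ℕ)+a+b = a+b+1 from by omega]
        rw [Nat.choose_succ_succ' (p+a+b+2) b, Nat.choose_succ_succ' (a+b+1) a]
        ring
    · -- rec1
      rw [psSum_rec1 p q a b, ih p q (a+1) (b+1) (by omega),
        ih p (q+1) a (b+1) (by omega), ih (p+1) (q+2) a b (by omega)]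
      simp only [show p+(a+1)+(b+1) = (p+a+b+1)+1 from by omega,
        show p+a+(b+1) = p+a+b+1 from by omega,
        show (p+1)+a+b = p+a+b+1 from by omega,
        show q+(a+1)+(b+1) = q+a+b+2 from by omega,
        show (q+1)+a+(b+1) = q+a+b+2 from by omega,
        show (q+2)+a+b = q+a+b+2 from by omega,
        show (q+1)+(a+1)+(b+1) = (q+a+b+2)+1 from by omega]
      rw [Nat.choose_succ_succ' (q+a+b+2) a, Nat.choose_succ_succ' (p+a+b+1) b]
      ring

lemma main' (i j k : ℕ) (hji : j ≤ i) :
    k.choose i * (k + i).choose i * k.choose j * (k + j).choose j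
      = ∑ s ∈ Finset.Icc (max i j) (i + j),
          s.choose i * s.choose j * (i + j).choose s * k.choose s * (k + s).choose s := by
  rw [max_eq_left hji]
  rcases lt_or_ge k i with hk | hk
  · rw [Nat.choose_eq_zero_of_lt hk]
    rw [Finset.sum_eq_zero]
    · ring
    · intro s hs
      rw [Finset.mem_Icc] at hs
      rw [Nat.choose_eq_zero_of_lt (show k < s by omega)]
      ring
  · obtain ⟨q, rfl⟩ : ∃ q, i = j + q := ⟨i - j, by omega⟩
    obtain ⟨b, rfl⟩ : ∃ b, k = j + q + b := ⟨k - (j+q), by omega⟩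
    rw [← Finset.Ico_add_one_right_eq_Icc, Finset.sum_Ico_eq_sum_range]
    rw [show j + q + j + 1 - (j + q) = j + 1 by omega]
    have hterm : ∀ t ∈ Finset.range (j+1),
        (j+q+t).choose (j+q) * (j+q+t).choose j * (j+q+j).choose (j+q+t)
            * (j+q+b).choose (j+q+t) * (j+q+b+(j+q+t)).choose (j+q+t)
          = ((j+q+j).choose (j+q) * (j+q+b+(j+q)).choose (j+q)) * psTerm (j+q) q j b t := by
      intro t ht
      rw [Finset.mem_range] at ht
      simp only [psTerm]
      rcases lt_or_ge (j+q+b) (j+q+t) with hbt | hbt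
      · rw [Nat.choose_eq_zero_of_lt hbt]
        ring
      · -- in range: prove via ℚ
        have key : (((j+q+t).choose (j+q) * (j+q+t).choose j * (j+q+j).choose (j+q+t)
            * (j+q+b).choose (j+q+t) * (j+q+b+(j+q+t)).choose (j+q+t) : ℕ) : ℚ)
          = (((j+q+j).choose (j+q) * (j+q+b+(j+q)).choose (j+q) *
              ((j+q+q+j+b+t).choose (j+q+q+j+b) *
                ((q+j).choose (q+t) * (j+q+b).choose (j+q+t))) : ℕ) : ℚ) := by
          push_cast
          rw [Nat.cast_choose ℚ (show j+q ≤ j+q+t by omega),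
              Nat.cast_choose ℚ (show j ≤ j+q+t by omega),
              Nat.cast_choose ℚ (show j+q+t ≤ j+q+j by omega),
              Nat.cast_choose ℚ (show j+q+t ≤ j+q+b by omega),
              Nat.cast_choose ℚ (show j+q+t ≤ j+q+b+(j+q+t) by omega),
              Nat.cast_choose ℚ (show j+q ≤ j+q+j by omega),
              Nat.cast_choose ℚ (show j+q ≤ j+q+b+(j+q) by omega),
              Nat.cast_choose ℚ (show j+q+q+j+b ≤ j+q+q+j+b+t by omega),
              Nat.cast_choose ℚ (show q+t ≤ q+j by omega)]
          simp only [show j+q+t-(j+q) = t from by omega,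
            show j+q+t-j = q+t from by omega,
            show j+q+j-(j+q+t) = j-t from by omega,
            show j+q+b-(j+q+t) = b-t from by omega,
            show j+q+b+(j+q+t)-(j+q+t) = j+q+b from by omega,
            show j+q+j-(j+q) = j from by omega,
            show j+q+b+(j+q)-(j+q) = j+q+b from by omega,
            show j+q+q+j+b+t-(j+q+q+j+b) = t from by omega,
            show q+j-(q+t) = j-t from by omega,
            show j+q+b+(j+q+t) = j+q+q+j+b+t from by omega,
            show j+q+b+(j+q) = j+q+q+j+b from by omega,
            show q+j = j+q from by omega,
            show j+q+q+j+b-(j+q) = j+q+b from by omega,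
            show j+q+q+j+b+t-(j+q+t) = j+q+b from by omega,
            show j+q-(q+t) = j-t from by omega]
          have n1 : ((j+q+t)! : ℚ) ≠ 0 := by positivity
          have n2 : ((j+q)! : ℚ) ≠ 0 := by positivity
          have n3 : (t ! : ℚ) ≠ 0 := by positivity
          have n4 : (j ! : ℚ) ≠ 0 := by positivity
          have n5 : ((q+t)! : ℚ) ≠ 0 := by positivity
          have n6 : ((j-t)! : ℚ) ≠ 0 := by positivity
          have n7 : ((b-t)! : ℚ) ≠ 0 := by positivity
          have n8 : ((j+q+b)! : ℚ) ≠ 0 := by positivity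
          have n9 : ((j+q+j)! : ℚ) ≠ 0 := by positivity
          have n10 : ((j+q+q+j+b)! : ℚ) ≠ 0 := by positivity
          have n11 : ((j+q+q+j+b+t)! : ℚ) ≠ 0 := by positivity
          field_simp
        exact_mod_cast key
    rw [Finset.sum_congr rfl hterm, ← Finset.mul_sum]
    rw [show ∑ t ∈ Finset.range (j+1), psTerm (j+q) q j b t = psSum (j+q) q j b from rfl,
      psSum_closed]
    -- final identity
    have key2 : (((j+q+b).choose (j+q) * (j+q+b+(j+q)).choose (j+q) * (j+q+b).choose j
        * (j+q+b+j).choose j : ℕ) : ℚ)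
      = (((j+q+j).choose (j+q) * (j+q+b+(j+q)).choose (j+q) *
          ((j+q+j+b).choose b * (q+j+b).choose j) : ℕ) : ℚ) := by
      push_cast
      rw [Nat.cast_choose ℚ (show j+q ≤ j+q+b by omega),
          Nat.cast_choose ℚ (show j+q ≤ j+q+b+(j+q) by omega),
          Nat.cast_choose ℚ (show j ≤ j+q+b by omega),
          Nat.cast_choose ℚ (show j ≤ j+q+b+j by omega),
          Nat.cast_choose ℚ (show j+q ≤ j+q+j by omega),
          Nat.cast_choose ℚ (show b ≤ j+q+j+b by omega),
          Nat.cast_choose ℚ (show j ≤ q+j+b by omega)]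
      simp only [show j+q+b-(j+q) = b from by omega,
        show j+q+b+(j+q)-(j+q) = j+q+b from by omega,
        show j+q+b-j = q+b from by omega,
        show j+q+b+j-j = j+q+b from by omega,
        show j+q+j-(j+q) = j from by omega,
        show j+q+j+b-b = j+q+j from by omega,
        show q+j+b-j = q+b from by omega,
        show j+q+b+j = j+q+j+b from by omega,
        show q+j+b = j+q+b from by omega,
        show j+q+j+b-j = j+q+b from by omega]
      have n1 : ((j+q+b)! : ℚ) ≠ 0 := by positivity
      have n2 : ((j+q)! : ℚ) ≠ 0 := by positivity
      have n3 : (b ! : ℚ) ≠ 0 := by positivity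
      have n4 : (j ! : ℚ) ≠ 0 := by positivity
      have n5 : ((q+b)! : ℚ) ≠ 0 := by positivity
      have n6 : ((j+q+j)! : ℚ) ≠ 0 := by positivity
      field_simp
    exact_mod_cast key2


theorem choose_prod_eq_sum_s (i j k : ℕ) :
    k.choose i * (k + i).choose i * k.choose j * (k + j).choose j
      = ∑ s ∈ Finset.Icc (max i j) (i + j),
          s.choose i * s.choose j * (i + j).choose s * k.choose s * (k + s).choose s := by
  rcases le_total j i with h | h
  · exact main' i j k h
  · have H := main' j i k h
    rw [show k.choose i * (k + i).choose i * k.choose j * (k + j).choose j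
        = k.choose j * (k + j).choose j * k.choose i * (k + i).choose i from by ring, H]
    apply Finset.sum_congr
    · rw [max_comm, Nat.add_comm j i]
    · intro s _
      rw [Nat.add_comm j i]
      ring
end

section
/- For all nonnegative integers s and all positive integers n, the identity ∑_{k=s}^{n−1} C(k,s)·C(k+s,s) = (n/(2s+1))·C(n+s,s)·C(n−1,s) holds. -/
lemma sum_choose_mul_choose_aux (s n : ℕ) (hn : 0 < n) :
    (∑ k ∈ Finset.Icc s (n - 1), (k.choose s : ℚ) * ((k + s).choose s : ℚ)) * (2 * s + 1)
      = (n : ℚ) * ((n + s).choose s : ℚ) * ((n - 1).choose s : ℚ) := by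
  induction n, hn using Nat.le_induction with
  | base =>
    rcases Nat.eq_zero_or_pos s with hs | hs
    · subst hs; simp
    · rw [Finset.Icc_eq_empty (by omega)]
      simp [Nat.choose_eq_zero_of_lt hs]
  | succ n hn ih =>
    simp only [Nat.add_sub_cancel]
    by_cases h : s ≤ n
    · have hIcc : n - 1 + 1 = n := Nat.succ_pred_eq_of_pos hn
      rw [← hIcc, Finset.sum_Icc_succ_top (by omega), hIcc]
      have h1 : ((n + s).choose s : ℚ) * ((n : ℚ) + s + 1)
          = ((n + 1 + s).choose s : ℚ) * ((n : ℚ) + 1) := by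
        have := Nat.choose_mul_succ_eq (n + s) s
        have h' : n + s + 1 - s = n + 1 := by omega
        rw [h'] at this
        have h'' : n + s + 1 = n + 1 + s := by omega
        rw [h''] at this
        have h3 : ((n + s).choose s : ℚ) * ((n + 1 + s : ℕ) : ℚ)
            = ((n + 1 + s).choose s : ℚ) * ((n + 1 : ℕ) : ℚ) := by exact_mod_cast this
        push_cast at h3
        linear_combination h3
      have h2 : (((n - 1).choose s : ℚ)) * (n : ℚ)
          = ((n.choose s : ℚ)) * ((n : ℚ) - s) := by
        have := Nat.choose_mul_succ_eq (n - 1) s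
        rw [hIcc] at this
        have : ((n - 1).choose s : ℚ) * (n : ℚ) = (n.choose s : ℚ) * ((n - s : ℕ) : ℚ) := by
          exact_mod_cast this
        rw [this, Nat.cast_sub h]
      push_cast
      linear_combination ih + ((n + s).choose s : ℚ) * h2 + (n.choose s : ℚ) * h1
    · rw [Finset.Icc_eq_empty (by omega)]
      simp [Nat.choose_eq_zero_of_lt (by omega : n < s)]

theorem sum_choose_mul_choose_eq (s n : ℕ) (hn : 0 < n) :
    (∑ k ∈ Finset.Icc s (n - 1), (k.choose s : ℚ) * ((k + s).choose s : ℚ))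
      = (n : ℚ) / (2 * s + 1) * ((n + s).choose s : ℚ) * ((n - 1).choose s : ℚ) := by
  rw [div_mul_eq_mul_div, div_mul_eq_mul_div, eq_div_iff (by positivity)]
  linear_combination sum_choose_mul_choose_aux s n hn
end

section
/- For every nonnegative integer m, the identity ∑_{s=0}^{m} C(2s,s)·C(s,m−s)·(−1)^s/(s+1) = (−1)^m holds. -/
noncomputable def gq (m s : ℕ) : ℚ :=
  ((m : ℚ) + 1 - 2 * s) / (((m : ℚ) + 1) * ((m : ℚ) + 2)) *
    ((2 * s).choose s : ℚ) * (s.choose (m + 1 - s) : ℚ) * (-1) ^ s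

lemma key_tel (m s : ℕ) (hs : s ≤ m) :
    ((2 * s).choose s : ℚ) * (s.choose (m + 1 - s) : ℚ) * (-1) ^ s / (s + 1)
      + ((2 * s).choose s : ℚ) * (s.choose (m - s) : ℚ) * (-1) ^ s / (s + 1)
      = gq m (s + 1) - gq m s := by
  obtain ⟨k, rfl⟩ := Nat.exists_eq_add_of_le hs
  have h1 : s + k - s = k := by omega
  have h2 : s + k + 1 - s = k + 1 := by omega
  have h3 : s + k + 1 - (s + 1) = k := by omega
  rw [gq, gq, h1, h2, h3]
  rcases le_or_gt k s with hk | hk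
  · have hA0 := congrArg (Nat.cast (R := ℚ)) (Nat.choose_succ_right_eq s k)
    rw [Nat.cast_mul, Nat.cast_mul, Nat.cast_sub hk] at hA0
    push_cast at hA0
    have hA : ((s.choose (k + 1)) : ℚ) = s.choose k * ((s : ℚ) - k) / (k + 1) := by
      field_simp; linarith
    have hB0 := congrArg (Nat.cast (R := ℚ)) (Nat.succ_mul_centralBinom_succ s)
    have e1 : (2 * (s + 1)).choose (s + 1) = Nat.centralBinom (s + 1) := rfl
    have e2 : (2 * s).choose s = Nat.centralBinom s := rfl
    push_cast at hB0
    rw [e1, e2]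
    have hB : ((Nat.centralBinom (s + 1)) : ℚ)
        = 2 * (2 * s + 1) * (Nat.centralBinom s) / (s + 1) := by
      field_simp; linarith
    have hC0 := congrArg (Nat.cast (R := ℚ)) (Nat.choose_mul_succ_eq s k)
    rw [Nat.cast_mul, Nat.cast_mul, Nat.cast_sub (by omega : k ≤ s + 1)] at hC0
    push_cast at hC0
    have hne1 : (s : ℚ) + 1 - k ≠ 0 := by
      have : (k : ℚ) ≤ s := by exact_mod_cast hk
      nlinarith
    have hC : (((s + 1).choose k) : ℚ) = s.choose k * ((s : ℚ) + 1) / ((s : ℚ) + 1 - k) := by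
      field_simp; linarith
    rw [hA, hB, hC]
    have hne2 : ((s : ℚ) + k + 1) ≠ 0 := by positivity
    have hne3 : ((s : ℚ) + k + 2) ≠ 0 := by positivity
    push_cast
    field_simp
    ring
  · have hz1 : s.choose (k + 1) = 0 := Nat.choose_eq_zero_of_lt (by omega)
    have hz2 : s.choose k = 0 := Nat.choose_eq_zero_of_lt hk
    rcases eq_or_lt_of_le (Nat.succ_le_of_lt hk) with he | hlt
    · rw [hz1, hz2, ← he]
      push_cast
      ring
    · have hz3 : (s + 1).choose k = 0 := Nat.choose_eq_zero_of_lt hlt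
      rw [hz1, hz2, hz3]
      push_cast
      ring

theorem sum_centralBinom_alternating (m : ℕ) :
    ∑ s ∈ Finset.range (m + 1),
        ((2 * s).choose s : ℚ) * (s.choose (m - s) : ℚ) * (-1) ^ s / (s + 1)
      = (-1 : ℚ) ^ m := by
  induction m with
  | zero => norm_num
  | succ m ih =>
    have htel : ∑ s ∈ Finset.range (m + 1),
        (((2 * s).choose s : ℚ) * (s.choose (m + 1 - s) : ℚ) * (-1) ^ s / (s + 1)
          + ((2 * s).choose s : ℚ) * (s.choose (m - s) : ℚ) * (-1) ^ s / (s + 1))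
        = gq m (m + 1) - gq m 0 := by
      rw [← Finset.sum_range_sub (gq m)]
      exact Finset.sum_congr rfl fun s hsm =>
        key_tel m s (by have := Finset.mem_range.mp hsm; omega)
    rw [Finset.sum_add_distrib, ih] at htel
    rw [Finset.sum_range_succ]
    have hg0 : gq m 0 = 0 := by
      simp [gq, Nat.choose_eq_zero_of_lt (by omega : 0 < m + 1)]
    have hgm : gq m (m + 1) = ((m : ℚ) + 1 - 2 * (m + 1)) / (((m : ℚ) + 1) * ((m : ℚ) + 2)) *
        ((2 * (m + 1)).choose (m + 1) : ℚ) * (-1) ^ (m + 1) := by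
      simp [gq]
    have hlast : m + 1 - (m + 1) = 0 := by omega
    rw [hlast]
    rw [hg0, sub_zero, hgm] at htel
    have hsum : ∑ s ∈ Finset.range (m + 1),
        ((2 * s).choose s : ℚ) * (s.choose (m + 1 - s) : ℚ) * (-1) ^ s / (s + 1)
        = ((m : ℚ) + 1 - 2 * (m + 1)) / (((m : ℚ) + 1) * ((m : ℚ) + 2)) *
          ((2 * (m + 1)).choose (m + 1) : ℚ) * (-1) ^ (m + 1) - (-1 : ℚ) ^ m := by
      linarith
    rw [hsum]
    have hne1 : ((m : ℚ) + 1) ≠ 0 := by positivity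
    have hne2 : ((m : ℚ) + 2) ≠ 0 := by positivity
    simp only [Nat.choose_zero_right, Nat.cast_one, mul_one]
    push_cast
    field_simp
    ring
end

section
/- Let p > 3 be a prime and let m be an integer with 0 ≤ m ≤ p−2. Then ∑_{s=0}^{m} H^{(2)}_s ≡ ∑_{s=0}^{p−m−2} H^{(2)}_s (mod p), as a congruence of rational numbers. -/
/-- The `n`-th generalized harmonic number of order 2, `H^{(2)}_n = ∑_{k=1}^n 1/k^2`. -/
def H2 (n : ℕ) : ℚ := ∑ k ∈ Finset.Icc 1 n, 1 / (k : ℚ) ^ 2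

open Finset

section Aux

variable {p : ℕ} [hp : Fact p.Prime]

lemma sum_range_p (f : ZMod p → ZMod p) : ∑ k ∈ range p, f (k : ZMod p) = ∑ x : ZMod p, f x := by
  refine Finset.sum_nbij' (fun k => (k : ZMod p)) (fun x => x.val) ?_ ?_ ?_ ?_ ?_
  · intro a _; exact mem_univ _
  · intro x _; exact mem_range.mpr (ZMod.val_lt x)
  · intro a ha; exact ZMod.val_cast_of_lt (mem_range.mp ha)
  · intro x _; exact ZMod.natCast_zmod_val x
  · intro a _; rfl

lemma sum_Icc_p (f : ZMod p → ZMod p) (hf : f 0 = 0) :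
    ∑ k ∈ Icc 1 (p - 1), f (k : ZMod p) = ∑ x : ZMod p, f x := by
  rw [← sum_range_p (p := p) f]
  have hpos : 0 < p := hp.out.pos
  refine Finset.sum_subset ?_ ?_
  · intro k hk
    rw [mem_Icc] at hk
    exact mem_range.mpr (by omega)
  · intro k hk hnk
    rw [mem_range] at hk
    rw [mem_Icc] at hnk
    have : k = 0 := by omega
    simp [this, hf]

lemma zmodTwoNeZero (hp3 : 3 < p) : (2 : ZMod p) ≠ 0 := by
  have : ((2 : ℕ) : ZMod p) ≠ 0 := by
    rw [Ne, ZMod.natCast_eq_zero_iff]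
    intro h; have := Nat.le_of_dvd (by norm_num) h; omega
  simpa using this

lemma zmodThreeNeZero (hp3 : 3 < p) : (3 : ZMod p) ≠ 0 := by
  have : ((3 : ℕ) : ZMod p) ≠ 0 := by
    rw [Ne, ZMod.natCast_eq_zero_iff]
    intro h; have := Nat.le_of_dvd (by norm_num) h; omega
  simpa using this

lemma sum_univ_id_eq_zero (hp3 : 3 < p) : ∑ x : ZMod p, x = 0 := by
  have h2 := zmodTwoNeZero hp3
  have key : ∑ x : ZMod p, (2 * x) = ∑ x : ZMod p, x :=
    Finset.sum_bijective (fun x => 2 * x) (Equiv.mulLeft₀ (2 : ZMod p) h2).bijective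
      (fun i => by simp) (fun i _ => rfl)
  have h2sum : ∑ x : ZMod p, 2 * x = 2 * ∑ x : ZMod p, x := by rw [Finset.mul_sum]
  set S := ∑ x : ZMod p, x with hS
  have hkey : 2 * S = S := by rw [← h2sum]; exact key
  linear_combination hkey

lemma sum_univ_sq_eq_zero (hp3 : 3 < p) : ∑ x : ZMod p, x ^ 2 = 0 := by
  have h2 := zmodTwoNeZero hp3
  have h3 := zmodThreeNeZero hp3
  have key : ∑ x : ZMod p, (2 * x) ^ 2 = ∑ x : ZMod p, x ^ 2 :=
    Finset.sum_bijective (fun x => 2 * x) (Equiv.mulLeft₀ (2 : ZMod p) h2).bijective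
      (fun i => by simp) (fun i _ => rfl)
  set T := ∑ x : ZMod p, x ^ 2 with hT
  have h4 : (4 : ZMod p) * T = T := by
    calc (4 : ZMod p) * T = ∑ x : ZMod p, (2 * x) ^ 2 := by
          rw [hT, Finset.mul_sum]
          exact Finset.sum_congr rfl fun x _ => by ring
      _ = T := key
  have h3T : (3 : ZMod p) * T = 0 := by linear_combination h4
  rcases mul_eq_zero.mp h3T with h | h
  · exact absurd h h3
  · exact h

lemma sum_inv_eq_zero (hp3 : 3 < p) : ∑ k ∈ Icc 1 (p - 1), ((k : ZMod p))⁻¹ = 0 := by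
  rw [sum_Icc_p (f := fun x => x⁻¹) (by simp)]
  have : ∑ x : ZMod p, x⁻¹ = ∑ x : ZMod p, x :=
    Finset.sum_bijective (fun x => x⁻¹) inv_involutive.bijective
      (fun i => by simp) (fun i _ => rfl)
  rw [this, sum_univ_id_eq_zero hp3]

lemma sum_inv_sq_eq_zero (hp3 : 3 < p) : ∑ k ∈ Icc 1 (p - 1), (((k : ZMod p)) ^ 2)⁻¹ = 0 := by
  rw [sum_Icc_p (f := fun x => (x ^ 2)⁻¹) (by simp)]
  have : ∑ x : ZMod p, (x ^ 2)⁻¹ = ∑ x : ZMod p, x ^ 2 :=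
    Finset.sum_bijective (fun x => x⁻¹) inv_involutive.bijective
      (fun i => by simp) (fun i _ => by simp [inv_pow])
  rw [this, sum_univ_sq_eq_zero hp3]

end Aux

/-- Fubini for the triangular sum. -/
lemma swap_sum {A : Type*} [AddCommMonoid A] (g : ℕ → A) (M : ℕ) :
    ∑ s ∈ range (M + 1), ∑ k ∈ Icc 1 s, g k = ∑ k ∈ Icc 1 M, (M + 1 - k) • g k := by
  induction M with
  | zero => simp
  | succ M ih =>
    rw [Finset.sum_range_succ, ih]
    have hins : Icc 1 (M + 1) = insert (M + 1) (Icc 1 M) := by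
      ext x
      simp only [Finset.mem_Icc, Finset.mem_insert]
      omega
    rw [hins, Finset.sum_insert (by simp), Finset.sum_insert (by simp)]
    have h1 : (M + 1 + 1 - (M + 1)) • g (M + 1) = g (M + 1) := by
      norm_num
    rw [h1]
    have h2 : ∑ k ∈ Icc 1 M, (M + 1 + 1 - k) • g k
        = ∑ k ∈ Icc 1 M, ((M + 1 - k) • g k + g k) := by
      refine Finset.sum_congr rfl fun k hk => ?_
      rw [mem_Icc] at hk
      have : M + 1 + 1 - k = (M + 1 - k) + 1 := by omega
      rw [this, add_smul, one_smul]
    rw [h2, Finset.sum_add_distrib]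
    abel

/-- The key reflection identity in `ZMod p`. -/
lemma zmod_main {p : ℕ} [hp : Fact p.Prime] (hp3 : 3 < p) (m : ℕ) (hm : m ≤ p - 2) :
    ∑ s ∈ range (m + 1), ∑ k ∈ Icc 1 s, (((k : ZMod p)) ^ 2)⁻¹
      = ∑ s ∈ range (p - m - 2 + 1), ∑ k ∈ Icc 1 s, (((k : ZMod p)) ^ 2)⁻¹ := by
  set n := p - m - 2 with hn
  have hmn : m + 2 ≤ p := by omega
  set g : ℕ → ZMod p := fun k => ((k : ZMod p) ^ 2)⁻¹ with hg
  rw [show (∑ s ∈ range (m + 1), ∑ k ∈ Icc 1 s, (((k : ZMod p)) ^ 2)⁻¹)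
      = ∑ s ∈ range (m + 1), ∑ k ∈ Icc 1 s, g k from rfl,
    show (∑ s ∈ range (n + 1), ∑ k ∈ Icc 1 s, (((k : ZMod p)) ^ 2)⁻¹)
      = ∑ s ∈ range (n + 1), ∑ k ∈ Icc 1 s, g k from rfl,
    swap_sum g m, swap_sum g n]
  set h : ℕ → ZMod p := fun j => (((m : ZMod p) + 1) - (j : ZMod p)) * g j with hh
  have e1 : ∑ k ∈ Icc 1 m, (m + 1 - k) • g k = ∑ k ∈ Icc 1 m, h k := by
    refine Finset.sum_congr rfl fun k hk => ?_
    rw [mem_Icc] at hk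
    rw [nsmul_eq_mul, hh]
    congr 1
    push_cast [Nat.cast_sub (by omega : k ≤ m + 1)]
    ring
  have e2 : ∑ k ∈ Icc 1 n, (n + 1 - k) • g k = - ∑ j ∈ Icc (m + 2) (p - 1), h j := by
    rw [← Finset.sum_neg_distrib]
    refine Finset.sum_nbij' (fun k => p - k) (fun j => p - j) ?_ ?_ ?_ ?_ ?_
    · intro k hk; simp only [mem_Icc] at hk ⊢; omega
    · intro j hj; simp only [mem_Icc] at hj ⊢; omega
    · intro k hk; simp only [mem_Icc] at hk; omega
    · intro j hj; simp only [mem_Icc] at hj; omega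
    · intro k hk
      simp only [mem_Icc] at hk
      have hkp : k ≤ p := by omega
      have hc1 : ((p - k : ℕ) : ZMod p) = - (k : ZMod p) := by
        push_cast [Nat.cast_sub hkp]
        simp
      have hgc : g (p - k) = g k := by
        simp only [hg, hc1, neg_sq]
      have hcoef : ((n + 1 - k : ℕ) : ZMod p) = -(((m : ZMod p) + 1) + (k : ZMod p)) := by
        have hstep : n + 1 - k = p - (m + 1 + k) := by omega
        rw [hstep, Nat.cast_sub (by omega : m + 1 + k ≤ p)]
        push_cast
        simp
      rw [nsmul_eq_mul, hcoef]
      simp only [hh, hgc, hc1]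
      ring
  rw [e1, e2, ← sub_eq_zero, sub_neg_eq_add]
  have hsplit : ∑ k ∈ Icc 1 m, h k + ∑ j ∈ Icc (m + 2) (p - 1), h j
      = ∑ k ∈ Icc 1 (p - 1), h k := by
    have hIcc : ∀ a b : ℕ, Icc a b = Ico a (b + 1) := fun a b => by
      rw [Finset.Ico_add_one_right_eq_Icc]
    rw [hIcc 1 m, hIcc (m + 2) (p - 1), hIcc 1 (p - 1)]
    have hp1 : p - 1 + 1 = p := by omega
    rw [hp1]
    have hmid : ∑ j ∈ Ico (m + 1) p, h j = h (m + 1) + ∑ j ∈ Ico (m + 2) p, h j :=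
      Finset.sum_eq_sum_Ico_succ_bot (by omega) h
    have hm1 : h (m + 1) = 0 := by
      simp only [hh]
      push_cast
      ring
    rw [← Finset.sum_Ico_consecutive h (by omega : 1 ≤ m + 1) (by omega : m + 1 ≤ p),
      hmid, hm1, zero_add]
  rw [hsplit]
  have hfull : ∑ k ∈ Icc 1 (p - 1), h k
      = ((m : ZMod p) + 1) * (∑ k ∈ Icc 1 (p - 1), ((k : ZMod p) ^ 2)⁻¹)
        - ∑ k ∈ Icc 1 (p - 1), ((k : ZMod p))⁻¹ := by
    rw [Finset.mul_sum, ← Finset.sum_sub_distrib]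
    refine Finset.sum_congr rfl fun k hk => ?_
    rw [mem_Icc] at hk
    have hk0 : (k : ZMod p) ≠ 0 := by
      rw [Ne, ZMod.natCast_eq_zero_iff]
      intro hd
      have := Nat.le_of_dvd (by omega) hd
      omega
    have hkinv : (k : ZMod p) * ((k : ZMod p) ^ 2)⁻¹ = ((k : ZMod p))⁻¹ := by
      field_simp
    simp only [hh, hg]
    rw [sub_mul, hkinv]
  rw [hfull, sum_inv_sq_eq_zero hp3, sum_inv_eq_zero hp3]
  ring

theorem sum_H2_reflect (p m : ℕ) (hp : p.Prime) (hp3 : 3 < p) (hm : m ≤ p - 2) :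
    padicNorm p ((∑ s ∈ Finset.range (m + 1), H2 s)
        - ∑ s ∈ Finset.range (p - m - 2 + 1), H2 s)
      ≤ (p : ℚ) ^ (-1 : ℤ) := by
  haveI : Fact p.Prime := ⟨hp⟩
  set n := p - m - 2 with hn
  have hmn : m + 2 ≤ p := by omega
  set L : ℕ := Nat.factorial (p - 1) with hL
  have hkdvd : ∀ k : ℕ, 1 ≤ k → k ≤ p - 1 → k ∣ L := fun k h1 h2 =>
    Nat.dvd_factorial h1 h2
  have hpL : ¬ p ∣ L := by
    rw [hL, hp.dvd_factorial]
    omega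
  have hL0 : (L : ℚ) ≠ 0 := by
    exact_mod_cast (Nat.factorial_ne_zero (p - 1))
  set c : ℕ → ℕ := fun k => L / k with hcdef
  -- the integer numerators
  set N1 : ℤ := ∑ s ∈ range (m + 1), ∑ k ∈ Icc 1 s, ((c k : ℕ) : ℤ) ^ 2 with hN1
  set N2 : ℤ := ∑ s ∈ range (n + 1), ∑ k ∈ Icc 1 s, ((c k : ℕ) : ℤ) ^ 2 with hN2
  -- clearing denominators
  have hblock : ∀ M : ℕ, M ≤ p - 2 →
      (∑ s ∈ Finset.range (M + 1), H2 s) * (L : ℚ) ^ 2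
        = ((∑ s ∈ range (M + 1), ∑ k ∈ Icc 1 s, ((c k : ℕ) : ℤ) ^ 2 : ℤ) : ℚ) := by
    intro M hM
    push_cast
    rw [Finset.sum_mul]
    refine Finset.sum_congr rfl fun s hs => ?_
    rw [mem_range] at hs
    unfold H2
    rw [Finset.sum_mul]
    refine Finset.sum_congr rfl fun k hk => ?_
    rw [mem_Icc] at hk
    have hk1 : 1 ≤ k := hk.1
    have hkp : k ≤ p - 1 := by omega
    have hk0 : (k : ℚ) ≠ 0 := by positivity
    have hmulL : ((c k : ℕ) : ℚ) * (k : ℚ) = (L : ℚ) := by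
      exact_mod_cast congrArg (Nat.cast : ℕ → ℚ) (Nat.div_mul_cancel (hkdvd k hk1 hkp))
    have hdiv : ((c k : ℕ) : ℚ) = (L : ℚ) / (k : ℚ) := by
      rw [eq_div_iff hk0]
      exact hmulL
    rw [hdiv]
    field_simp
  have E : ((∑ s ∈ Finset.range (m + 1), H2 s) - ∑ s ∈ Finset.range (n + 1), H2 s)
      * (L : ℚ) ^ 2 = ((N1 - N2 : ℤ) : ℚ) := by
    rw [sub_mul, hblock m (by omega), hblock n (by omega), hN1, hN2]
    push_cast
    ring
  -- p divides the numerator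
  have hdvdN : (p : ℤ) ∣ (N1 - N2) := by
    rw [← ZMod.intCast_zmod_eq_zero_iff_dvd]
    have hcast : ∀ (M : ℕ), M ≤ p - 2 →
        ((∑ s ∈ range (M + 1), ∑ k ∈ Icc 1 s, ((c k : ℕ) : ℤ) ^ 2 : ℤ) : ZMod p)
          = (L : ZMod p) ^ 2 * ∑ s ∈ range (M + 1), ∑ k ∈ Icc 1 s,
              (((k : ZMod p)) ^ 2)⁻¹ := by
      intro M hM
      push_cast
      rw [Finset.mul_sum]
      refine Finset.sum_congr rfl fun s hs => ?_
      rw [mem_range] at hs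
      rw [Finset.mul_sum]
      refine Finset.sum_congr rfl fun k hk => ?_
      rw [mem_Icc] at hk
      have hk0 : (k : ZMod p) ≠ 0 := by
        rw [Ne, ZMod.natCast_eq_zero_iff]
        intro hd
        have := Nat.le_of_dvd (by omega) hd
        omega
      have hmulL : ((c k : ℕ) : ZMod p) * (k : ZMod p) = (L : ZMod p) := by
        exact_mod_cast congrArg (Nat.cast : ℕ → ZMod p)
          (Nat.div_mul_cancel (hkdvd k hk.1 (by omega)))
      have : ((c k : ℕ) : ZMod p) = (L : ZMod p) * ((k : ZMod p))⁻¹ := by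
        rw [eq_mul_inv_iff_mul_eq₀ hk0]
        exact hmulL
      rw [this, mul_pow, inv_pow]
    push_cast
    rw [hcast m (by omega), hcast n (by omega), zmod_main hp3 m hm]
    ring
  -- assemble
  have hd : (∑ s ∈ Finset.range (m + 1), H2 s) - ∑ s ∈ Finset.range (n + 1), H2 s
      = ((N1 - N2 : ℤ) : ℚ) / (L : ℚ) ^ 2 := by
    rw [← E]
    field_simp
  rw [hd, padicNorm.div]
  have hnorm_num : padicNorm p ((N1 - N2 : ℤ) : ℚ) ≤ (p : ℚ) ^ (-1 : ℤ) := by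
    have : ((p ^ 1 : ℕ) : ℤ) ∣ (N1 - N2) := by simpa using hdvdN
    simpa using (padicNorm.dvd_iff_norm_le (p := p) (n := 1) (z := N1 - N2)).mp this
  have hnorm_den : padicNorm p ((L : ℚ) ^ 2) = 1 := by
    have h1 : padicNorm p (L : ℚ) = 1 := (padicNorm.nat_eq_one_iff _).mpr hpL
    rw [sq, padicNorm.mul, h1, mul_one]
  rw [hnorm_den, div_one]
  exact hnorm_num
end

section
/- Let p be a prime and let s be an integer with 0 ≤ s ≤ p−1. Then C(p+s,s)·C(p−1,s) ≡ (−1)^s·(1 − p^2·H^{(2)}_s) (mod p^4), as a congruence of rational numbers. -/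
/-- Product formula for the binomial products. -/
lemma key_prod (p s : ℕ) (hp : p.Prime) (hs : s ≤ p - 1) :
    ((p + s).choose s : ℚ) * ((p - 1).choose s : ℚ)
      = (-1 : ℚ) ^ s * ∏ k ∈ Finset.Icc 1 s, (1 - (p : ℚ) ^ 2 / (k : ℚ) ^ 2) := by
  induction s with
  | zero => simp
  | succ n ih =>
    have hn : n ≤ p - 1 := Nat.le_of_succ_le hs
    have hp2 : 2 ≤ p := hp.two_le
    have hnp : n + 1 < p := by omega
    have h1 : ((p + n + 1) : ℚ) * ((p + n).choose n : ℚ)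
        = ((p + n + 1).choose (n + 1) : ℚ) * (n + 1 : ℚ) := by
      exact_mod_cast congrArg (Nat.cast : ℕ → ℚ) (Nat.add_one_mul_choose_eq (p + n) n)
    have h2 : ((p - 1).choose (n + 1) : ℚ) * (n + 1 : ℚ)
        = ((p - 1).choose n : ℚ) * ((p : ℚ) - 1 - n) := by
      have := congrArg (Nat.cast : ℕ → ℚ) (Nat.choose_succ_right_eq (p - 1) n)
      push_cast at this
      rwa [Nat.cast_sub (by omega : n ≤ p - 1), Nat.cast_sub (by omega : 1 ≤ p)] at this
    have hne : ((n : ℚ) + 1) ≠ 0 := by positivity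
    have hprod : ∏ k ∈ Finset.Icc 1 (n + 1), (1 - (p : ℚ) ^ 2 / (k : ℚ) ^ 2)
        = (∏ k ∈ Finset.Icc 1 n, (1 - (p : ℚ) ^ 2 / (k : ℚ) ^ 2))
          * (1 - (p : ℚ) ^ 2 / ((n : ℚ) + 1) ^ 2) := by
      rw [Finset.prod_Icc_succ_top (by omega)]
      push_cast
      ring
    -- express new chooses
    have ha : ((p + (n + 1)).choose (n + 1) : ℚ)
        = ((p + n + 1) : ℚ) * ((p + n).choose n : ℚ) / ((n : ℚ) + 1) := by
      rw [show p + (n + 1) = p + n + 1 by ring]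
      field_simp at h1 ⊢
      linarith [h1]
    have hb : ((p - 1).choose (n + 1) : ℚ)
        = ((p - 1).choose n : ℚ) * ((p : ℚ) - 1 - n) / ((n : ℚ) + 1) := by
      field_simp
      linarith [h2]
    rw [ha, hb, hprod, pow_succ]
    rw [div_eq_mul_inv ((p:ℚ)^2), ← inv_pow]
    have hinv : ((n:ℚ)+1) * ((n:ℚ)+1)⁻¹ = 1 := mul_inv_cancel₀ hne
    linear_combination (((p:ℚ)^2 - ((n:ℚ)+1)^2) * (((n:ℚ)+1)⁻¹)^2) * ih hn
      - (∏ k ∈ Finset.Icc 1 n, (1 - (p : ℚ) ^ 2 / (k : ℚ) ^ 2)) * (-1 : ℚ) ^ n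
        * (1 + ((n:ℚ)+1) * ((n:ℚ)+1)⁻¹) * hinv

lemma prod_bound (p : ℕ) [Fact p.Prime] (t : Finset ℕ) (x : ℕ → ℚ)
    (hx : ∀ k ∈ t, padicNorm p (x k) ≤ (p : ℚ) ^ (-2 : ℤ)) :
    padicNorm p ((∏ k ∈ t, (1 + x k)) - 1 - ∑ k ∈ t, x k) ≤ (p : ℚ) ^ (-4 : ℤ) ∧
    padicNorm p ((∏ k ∈ t, (1 + x k)) - 1) ≤ (p : ℚ) ^ (-2 : ℤ) := by
  classical
  have hp2 : 2 ≤ p := (Fact.out : p.Prime).two_le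
  have hp1 : (1 : ℚ) ≤ (p : ℚ) := by exact_mod_cast Nat.one_le_of_lt hp2
  have hp0 : (p : ℚ) ≠ 0 := by positivity
  have h4pos : (0 : ℚ) ≤ (p : ℚ) ^ (-4 : ℤ) := by positivity
  have h2pos : (0 : ℚ) ≤ (p : ℚ) ^ (-2 : ℤ) := by positivity
  have h42 : (p : ℚ) ^ (-4 : ℤ) ≤ (p : ℚ) ^ (-2 : ℤ) :=
    zpow_le_zpow_right₀ hp1 (by norm_num)
  have hmul : (p : ℚ) ^ (-2 : ℤ) * (p : ℚ) ^ (-2 : ℤ) = (p : ℚ) ^ (-4 : ℤ) := by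
    rw [← zpow_add₀ hp0]; norm_num
  induction t using Finset.induction with
  | empty =>
    simp only [Finset.prod_empty, Finset.sum_empty, sub_zero, sub_self, padicNorm.zero]
    exact ⟨h4pos, h2pos⟩
  | insert a t ha IH =>
    have hIH := IH (fun k hk => hx k (Finset.mem_insert_of_mem hk))
    have hxa := hx a (Finset.mem_insert_self a t)
    rw [Finset.prod_insert ha, Finset.sum_insert ha]
    set P := ∏ k ∈ t, (1 + x k)
    set S := ∑ k ∈ t, x k
    constructor
    · have key : (1 + x a) * P - 1 - (x a + S) = (P - 1 - S) + (P - 1) * x a := by ring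
      rw [key]
      refine padicNorm.nonarchimedean.trans (max_le hIH.1 ?_)
      rw [padicNorm.mul]
      calc padicNorm p (P - 1) * padicNorm p (x a)
          ≤ (p : ℚ) ^ (-2 : ℤ) * (p : ℚ) ^ (-2 : ℤ) :=
            mul_le_mul hIH.2 hxa (padicNorm.nonneg _) h2pos
        _ = (p : ℚ) ^ (-4 : ℤ) := hmul
    · have key : (1 + x a) * P - 1
          = ((1 + x a) * P - 1 - (x a + S)) + (x a + S) := by ring
      rw [key]
      refine padicNorm.nonarchimedean.trans (max_le ?_ ?_)
      · -- reuse first part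
        have key2 : (1 + x a) * P - 1 - (x a + S) = (P - 1 - S) + (P - 1) * x a := by ring
        rw [key2]
        refine (padicNorm.nonarchimedean.trans (max_le hIH.1 ?_)).trans h42
        rw [padicNorm.mul]
        calc padicNorm p (P - 1) * padicNorm p (x a)
            ≤ (p : ℚ) ^ (-2 : ℤ) * (p : ℚ) ^ (-2 : ℤ) :=
              mul_le_mul hIH.2 hxa (padicNorm.nonneg _) h2pos
          _ = (p : ℚ) ^ (-4 : ℤ) := hmul
      · refine padicNorm.nonarchimedean.trans (max_le hxa ?_)
        exact padicNorm.sum_le' (fun k hk => hx k (Finset.mem_insert_of_mem hk)) h2pos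

theorem choose_mul_choose_cong (p s : ℕ) (hp : p.Prime) (hs : s ≤ p - 1) :
    padicNorm p (((p + s).choose s : ℚ) * ((p - 1).choose s : ℚ)
        - (-1 : ℚ) ^ s * (1 - (p : ℚ) ^ 2 * H2 s))
      ≤ (p : ℚ) ^ (-4 : ℤ) := by
  haveI : Fact p.Prime := ⟨hp⟩
  set x : ℕ → ℚ := fun k => -((p : ℚ) ^ 2 / (k : ℚ) ^ 2) with hxdef
  have hp2 : 2 ≤ p := hp.two_le
  have hx : ∀ k ∈ Finset.Icc 1 s, padicNorm p (x k) ≤ (p : ℚ) ^ (-2 : ℤ) := by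
    intro k hk
    rw [Finset.mem_Icc] at hk
    have hk0 : k ≠ 0 := by omega
    have hkp : ¬ p ∣ k := by
      intro h
      have := Nat.le_of_dvd (by omega) h
      omega
    have hknorm : padicNorm p (k : ℚ) = 1 := (padicNorm.nat_eq_one_iff k).2 hkp
    have : padicNorm p (x k) = (p : ℚ) ^ (-2 : ℤ) := by
      rw [hxdef]
      simp only []
      rw [padicNorm.neg, padicNorm.div, pow_two, pow_two, padicNorm.mul, padicNorm.mul,
        hknorm, padicNorm.padicNorm_p_of_prime, mul_one, zpow_neg]
      rw [div_one, ← mul_inv, ← pow_two]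
      norm_cast
    exact le_of_eq this
  have hprodeq : ∏ k ∈ Finset.Icc 1 s, (1 - (p : ℚ) ^ 2 / (k : ℚ) ^ 2)
      = ∏ k ∈ Finset.Icc 1 s, (1 + x k) :=
    Finset.prod_congr rfl (fun k _ => by rw [hxdef]; ring)
  have hsumeq : ∑ k ∈ Finset.Icc 1 s, x k = -((p : ℚ) ^ 2 * H2 s) := by
    have h1 : ∑ k ∈ Finset.Icc 1 s, x k
        = ∑ k ∈ Finset.Icc 1 s, (-(p : ℚ) ^ 2) * (1 / (k : ℚ) ^ 2) :=
      Finset.sum_congr rfl (fun k _ => by rw [hxdef]; ring)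
    rw [h1, ← Finset.mul_sum]
    unfold H2
    ring
  have hrw : ((p + s).choose s : ℚ) * ((p - 1).choose s : ℚ)
        - (-1 : ℚ) ^ s * (1 - (p : ℚ) ^ 2 * H2 s)
      = (-1 : ℚ) ^ s
        * ((∏ k ∈ Finset.Icc 1 s, (1 + x k)) - 1 - ∑ k ∈ Finset.Icc 1 s, x k) := by
    rw [key_prod p s hp hs, hprodeq, hsumeq]
    ring
  rw [hrw, padicNorm.mul]
  have hsign : padicNorm p ((-1 : ℚ) ^ s) = 1 := by
    rcases neg_one_pow_eq_or ℚ s with h | h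
    · rw [h, padicNorm.one]
    · rw [h, padicNorm.neg, padicNorm.one]
  rw [hsign, one_mul]
  exact (prod_bound p (Finset.Icc 1 s) x hx).1
end

section
/- Let p be an odd prime. For every integer x, ∑_{k=0}^{p−1} D_k(x)·S_k(x) = p·∑_{m=0}^{2p−2} ∑_{s=0}^{p−1} C(2s,m)·C(m+1,s+1)·C(p+s,s)·C(p−1,s)·x^m/(m+1)^2, as an identity of rational numbers (equivalently, of polynomials in x). -/
/-- The polynomial `D_n(x) = ∑_{k=0}^n C(n,k) C(n+k,k) x^k`. -/
def Dpoly (n : ℕ) (x : ℚ) : ℚ :=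
  ∑ k ∈ Finset.range (n + 1), (n.choose k : ℚ) * ((n + k).choose k : ℚ) * x ^ k

/-- The polynomial `S_n(x) = ∑_{k=0}^n C(n,k) C(n+k,k) x^k/(k+1)`. -/
def Spoly (n : ℕ) (x : ℚ) : ℚ :=
  ∑ k ∈ Finset.range (n + 1), (n.choose k : ℚ) * ((n + k).choose k : ℚ) * x ^ k / (k + 1)


section AuxLemmas
open Finset

/-- `A k s = C(k,s) * C(k+s,s)`. -/
def Aux (k s : ℕ) : ℕ := k.choose s * (k + s).choose s

/-- linearization coefficient -/
def Bc (i j s : ℕ) : ℕ := (i + j).choose i * s.choose i * i.choose (i + j - s)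

lemma Aux_zero (k : ℕ) : Aux k 0 = 1 := by simp [Aux]

lemma Aux_eq_zero {k s : ℕ} (h : k < s) : Aux k s = 0 := by
  simp [Aux, Nat.choose_eq_zero_of_lt h]

/-- `(j+1) * C(i+j+1, i) = (i+j+1) * C(i+j,i)` -/
lemma r3 (i j : ℕ) : (j + 1) * (i + j + 1).choose i = (i + j + 1) * (i + j).choose i := by
  have h1 : (i + j + 1).choose i = (i + j + 1).choose (j + 1) := by
    have := Nat.choose_symm_add (a := i) (b := j + 1)
    simpa [Nat.add_assoc] using this
  have h2 : (i + j).choose j = (i + j).choose i := by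
    rw [Nat.add_comm i j]; exact Nat.choose_symm_add
  have h3 := Nat.add_one_mul_choose_eq (i + j) j
  rw [← h1, h2] at h3
  rw [h3, Nat.mul_comm]

/-- `n * C(n-1, s) = (n - s) * C(n, s)` -/
lemma r2 (n s : ℕ) : n * (n - 1).choose s = (n - s) * n.choose s := by
  cases n with
  | zero => simp
  | succ n =>
    have := Nat.choose_mul_succ_eq n s
    simp only [Nat.add_sub_cancel]
    linarith [this]

/-- `(s+1)^2 * A k (s+1) = (k-s) * (k+s+1) * A k s` in ℕ -/
lemma auxN1 (k s : ℕ) :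
    (s + 1) ^ 2 * Aux k (s + 1) = (k - s) * (k + s + 1) * Aux k s := by
  have h1 : k.choose (s + 1) * (s + 1) = k.choose s * (k - s) := Nat.choose_succ_right_eq k s
  have h2 : (k + s + 1) * (k + s).choose s = (k + s + 1).choose (s + 1) * (s + 1) := by
    have := Nat.add_one_mul_choose_eq (k + s) s
    simpa [Nat.succ_eq_add_one] using this
  have : (s + 1) ^ 2 * (k.choose (s + 1) * (k + (s + 1)).choose (s + 1))
      = (k.choose (s + 1) * (s + 1)) * ((k + s + 1).choose (s + 1) * (s + 1)) := by
    rw [show k + (s + 1) = k + s + 1 by omega]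
    ring
  rw [Aux, this, h1, ← h2, Aux]
  ring

/-- ℚ version of the multiplication rule. -/
lemma auxQ1 (k s : ℕ) :
    ((s : ℚ) + 1) ^ 2 * Aux k (s + 1) = ((k : ℚ) ^ 2 + k - s ^ 2 - s) * Aux k s := by
  rcases le_or_gt s k with h | h
  · have := auxN1 k s
    have hc : ((k - s : ℕ) : ℚ) = (k : ℚ) - s := by
      push_cast [Nat.cast_sub h]; ring
    calc ((s : ℚ) + 1) ^ 2 * Aux k (s + 1)
        = (((s + 1) ^ 2 * Aux k (s + 1) : ℕ) : ℚ) := by push_cast; ring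
      _ = (((k - s) * (k + s + 1) * Aux k s : ℕ) : ℚ) := by rw [this]
      _ = ((k : ℚ) ^ 2 + k - s ^ 2 - s) * Aux k s := by push_cast [Nat.cast_sub h]; ring
  · rw [Aux_eq_zero h, Aux_eq_zero (h.trans (Nat.lt_succ_self s))]
    simp

/-- trinomial revision, unconditional in ℕ -/
lemma tri (s d v : ℕ) : s.choose (d + v) * (d + v).choose d = s.choose d * (s - d).choose v := by
  by_cases h : d + v ≤ s
  · have := Nat.choose_mul (n := s) (k := d + v) (s := d) (Nat.le_add_right d v)
    simpa [Nat.add_sub_cancel_left] using this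
  · push_neg at h
    rw [Nat.choose_eq_zero_of_lt h]
    rcases le_or_gt d s with h2 | h2
    · rw [Nat.choose_eq_zero_of_lt (show s - d < v by omega)]
      ring
    · rw [Nat.choose_eq_zero_of_lt h2]
      ring

/-- cast helper: `C(i,t+1) = C(i,t) * (i - t) / (t+1)` in ℚ -/
lemma castE1 (i t : ℕ) :
    (i.choose (t + 1) : ℚ) = i.choose t * ((i : ℚ) - t) / (t + 1) := by
  rw [eq_div_iff (by positivity : ((t : ℚ) + 1) ≠ 0)]
  rcases le_or_gt t i with h | h
  · have := Nat.choose_succ_right_eq i t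
    calc (i.choose (t + 1) : ℚ) * (t + 1) = ((i.choose (t + 1) * (t + 1) : ℕ) : ℚ) := by push_cast; ring
      _ = ((i.choose t * (i - t) : ℕ) : ℚ) := by rw [this]
      _ = (i.choose t : ℚ) * ((i : ℚ) - t) := by push_cast [Nat.cast_sub h]; ring
  · rw [Nat.choose_eq_zero_of_lt h, Nat.choose_eq_zero_of_lt (by omega)]
    simp

/-- cast helper: `C(s-1,i) = C(s,i) * (s - i) / s` for `1 ≤ s` -/
lemma castE2 (s i : ℕ) (hs : 1 ≤ s) :
    ((s - 1).choose i : ℚ) = s.choose i * ((s : ℚ) - i) / s := by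
  rw [eq_div_iff (by exact_mod_cast (by omega : s ≠ 0) : (s : ℚ) ≠ 0)]
  rcases le_or_gt i s with h | h
  · have := r2 s i
    calc ((s - 1).choose i : ℚ) * s = ((s * (s - 1).choose i : ℕ) : ℚ) := by push_cast; ring
      _ = (((s - i) * s.choose i : ℕ) : ℚ) := by rw [this]
      _ = (s.choose i : ℚ) * ((s : ℚ) - i) := by push_cast [Nat.cast_sub h]; ring
  · rw [Nat.choose_eq_zero_of_lt h, Nat.choose_eq_zero_of_lt (by omega)]
    simp

/-- cast helper: `C(i+j+1,i) = C(i+j,i) * (i+j+1) / (j+1)` -/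
lemma castE3 (i j : ℕ) :
    ((i + j + 1).choose i : ℚ) = (i + j).choose i * ((i : ℚ) + j + 1) / (j + 1) := by
  rw [eq_div_iff (by positivity : ((j : ℚ) + 1) ≠ 0)]
  have := r3 i j
  calc ((i + j + 1).choose i : ℚ) * ((j : ℚ) + 1) = (((j + 1) * (i + j + 1).choose i : ℕ) : ℚ) := by
        push_cast; ring
    _ = (((i + j + 1) * (i + j).choose i : ℕ) : ℚ) := by rw [this]
    _ = ((i + j).choose i : ℚ) * ((i : ℚ) + j + 1) := by push_cast; ring

lemma Bc_succ (i j s : ℕ) :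
    Bc i (j + 1) s = (i + j + 1).choose i * s.choose i * i.choose (i + j + 1 - s) := by
  unfold Bc
  rw [show i + (j + 1) = i + j + 1 by omega]

/-- the recurrence for the linearization coefficients, top term -/
lemma bcTop (i j : ℕ) :
    ((j : ℚ) + 1) ^ 2 * Bc i (j + 1) (i + j + 1) = ((i : ℚ) + j + 1) ^ 2 * Bc i j (i + j) := by
  rw [Bc_succ]
  unfold Bc
  simp only [Nat.sub_self, Nat.choose_zero_right]
  push_cast
  rw [castE3 i j]
  have h1 : ((j : ℚ) + 1) ≠ 0 := by positivity
  field_simp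

set_option maxHeartbeats 1000000 in
lemma bcRecMain (i j t s : ℕ) (hst : s + t = i + j) (hs1 : 1 ≤ s) (hi_le : i ≤ s)
    (ht_le : t ≤ i) :
    ((j : ℚ) + 1) ^ 2 * (((i + j + 1).choose i : ℚ) * s.choose i * i.choose (t + 1))
      = (((i + j).choose i : ℚ) * (s - 1).choose i * i.choose (t + 1)) * (s : ℚ) ^ 2
        + ((s : ℚ) ^ 2 + s - (j : ℚ) ^ 2 - j)
          * (((i + j).choose i : ℚ) * s.choose i * i.choose t) := by
  have hcast : (s : ℚ) = (i : ℚ) + j - t := by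
    have h : ((s : ℚ)) + t = (i : ℚ) + j := by exact_mod_cast congrArg (Nat.cast : ℕ → ℚ) hst
    linarith
  rw [castE1 i t, castE2 s i hs1, castE3 i j, hcast]
  have h1 : ((j : ℚ) + 1) ≠ 0 := by positivity
  have h2 : ((t : ℚ) + 1) ≠ 0 := by positivity
  have h3 : ((i : ℚ) + j - t) ≠ 0 := by
    have h4 : (1 : ℚ) ≤ (i : ℚ) + j - t := by rw [← hcast]; exact_mod_cast hs1
    linarith
  field_simp
  ring

set_option maxHeartbeats 1000000 in
/-- the recurrence for the linearization coefficients, main part -/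
lemma bcRec (i j s : ℕ) (hs : s ≤ i + j) :
    ((j : ℚ) + 1) ^ 2 * Bc i (j + 1) s
      = (Bc i j (s - 1) : ℚ) * (s : ℚ) ^ 2
        + ((s : ℚ) ^ 2 + s - (j : ℚ) ^ 2 - j) * Bc i j s := by
  rcases Nat.eq_zero_or_pos s with hs0 | hs1
  · subst hs0
    by_cases hij : i = 0 ∧ j = 0
    · obtain ⟨rfl, rfl⟩ := hij
      simp [Bc]
    · have hij' : i ≠ 0 ∨ j ≠ 0 := by tauto
      have hBc0 : Bc i j 0 = 0 := by
        unfold Bc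
        rcases Nat.eq_zero_or_pos i with hi | hi
        · subst hi
          have hj : 0 < j := by omega
          simp [Nat.choose_eq_zero_of_lt hj]
        · simp [Nat.choose_eq_zero_of_lt hi]
      have hBc1 : Bc i (j + 1) 0 = 0 := by
        rw [Bc_succ]
        rcases Nat.eq_zero_or_pos i with hi | hi
        · subst hi
          simp [Nat.choose_eq_zero_of_lt (show 0 < j + 1 by omega)]
        · simp [Nat.choose_eq_zero_of_lt hi]
      rw [hBc0, hBc1]
      push_cast
      ring
  · -- s ≥ 1
    set t := i + j - s with htdef
    have ht1 : i + j + 1 - s = t + 1 := by omega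
    have ht2 : i + j - (s - 1) = t + 1 := by omega
    have hst : s + t = i + j := by omega
    by_cases hsi : s.choose i = 0
    · have hlt : s < i := Nat.choose_eq_zero_iff.mp hsi
      have h1 : (s - 1).choose i = 0 := Nat.choose_eq_zero_of_lt (by omega)
      rw [Bc_succ]
      unfold Bc
      rw [hsi, h1]
      push_cast
      ring
    · by_cases hit : i.choose t = 0
      · have hlt : i < t := Nat.choose_eq_zero_iff.mp hit
        have h1 : i.choose (t + 1) = 0 := Nat.choose_eq_zero_of_lt (by omega)
        rw [Bc_succ]
        unfold Bc
        rw [ht1, ht2, ← htdef, h1, hit]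
        push_cast
        ring
      · have hi_le : i ≤ s := by
          by_contra h
          exact hsi (Nat.choose_eq_zero_of_lt (by omega))
        have ht_le : t ≤ i := by
          by_contra h
          exact hit (Nat.choose_eq_zero_of_lt (by omega))
        rw [Bc_succ]
        unfold Bc
        rw [ht1, ht2, ← htdef]
        push_cast
        have := bcRecMain i j t s hst hs1 hi_le ht_le
        push_cast at this
        linarith [this]

/-- Linearization: `A_i(k) A_j(k) = ∑_s Bc(i,j,s) A_s(k)`. -/
lemma linB (k i j : ℕ) :
    (Aux k i : ℚ) * Aux k j = ∑ s ∈ Finset.range (i + j + 1), (Bc i j s : ℚ) * Aux k s := by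
  induction j with
  | zero =>
    rw [Finset.sum_eq_single i]
    · have hB : Bc i 0 i = 1 := by
        unfold Bc
        simp
      rw [hB, Aux_zero]
      simp
    · intro b hb hne
      have hb' : b < i := by
        have := Finset.mem_range.mp hb
        omega
      have : Bc i 0 b = 0 := by
        unfold Bc
        rw [Nat.choose_eq_zero_of_lt hb']
        ring
      rw [this]
      simp
    · intro h
      exact absurd (Finset.mem_range.mpr (by omega)) h
  | succ j ih =>
    have hne : ((j : ℚ) + 1) ^ 2 ≠ 0 := by positivity
    apply mul_left_cancel₀ hne
    have hq := auxQ1 k j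
    have step1 : ((j : ℚ) + 1) ^ 2 * ((Aux k i : ℚ) * Aux k (j + 1))
        = ((k : ℚ) ^ 2 + k - j ^ 2 - j) * ((Aux k i : ℚ) * Aux k j) := by
      rw [show ((j:ℚ)+1)^2 * ((Aux k i : ℚ) * Aux k (j+1))
          = (Aux k i : ℚ) * (((j:ℚ)+1)^2 * Aux k (j+1)) by ring, hq]
      ring
    rw [step1, ih, Finset.mul_sum]
    have step2 : ∀ s : ℕ, ((k : ℚ) ^ 2 + k - j ^ 2 - j) * ((Bc i j s : ℚ) * Aux k s)
        = (Bc i j s : ℚ) * (((s : ℚ) + 1) ^ 2 * Aux k (s + 1))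
          + ((s : ℚ) ^ 2 + s - (j : ℚ) ^ 2 - j) * ((Bc i j s : ℚ) * Aux k s) := by
      intro s
      rw [auxQ1 k s]
      ring
    rw [Finset.sum_congr rfl (fun s _ => step2 s), Finset.sum_add_distrib]
    -- first sum: reindex
    have step3 : ∑ s ∈ Finset.range (i + j + 1), (Bc i j s : ℚ) * (((s : ℚ) + 1) ^ 2 * Aux k (s + 1))
        = ∑ u ∈ Finset.range (i + j + 2), (Bc i j (u - 1) : ℚ) * (u : ℚ) ^ 2 * Aux k u := by
      rw [Finset.sum_range_succ' (fun u => (Bc i j (u - 1) : ℚ) * (u : ℚ) ^ 2 * Aux k u) (i + j + 1)]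
      simp only [Nat.add_sub_cancel, Nat.cast_zero]
      norm_num
      exact Finset.sum_congr rfl fun x _ => by push_cast; ring
    rw [step3]
    have hrange : i + (j + 1) + 1 = (i + j + 1) + 1 := by omega
    rw [hrange, Finset.mul_sum]
    rw [Finset.sum_range_succ (fun s => ((j:ℚ)+1)^2 * ((Bc i (j+1) s : ℚ) * Aux k s)) (i + j + 1)]
    rw [Finset.sum_range_succ (fun u => (Bc i j (u - 1) : ℚ) * (u : ℚ) ^ 2 * Aux k u) (i + j + 1)]
    have hTop : ((j:ℚ)+1)^2 * ((Bc i (j+1) (i+j+1) : ℚ) * Aux k (i+j+1))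
        = (Bc i j (i+j+1-1) : ℚ) * ((i:ℚ)+j+1)^2 * Aux k (i+j+1) := by
      rw [show i + j + 1 - 1 = i + j from by omega]
      have := bcTop i j
      push_cast at this ⊢
      nlinarith [this, sq_nonneg ((Aux k (i+j+1) : ℚ))]
    rw [hTop]
    have hmain : ∑ x ∈ Finset.range (i + j + 1), (↑j + 1) ^ 2 * ((Bc i (j + 1) x : ℚ) * Aux k x)
        = ∑ x ∈ Finset.range (i + j + 1),
            ((Bc i j (x - 1) : ℚ) * (x : ℚ) ^ 2 * Aux k x
              + ((x : ℚ) ^ 2 + x - (j : ℚ) ^ 2 - j) * ((Bc i j x : ℚ) * Aux k x)) := by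
      refine Finset.sum_congr rfl fun x hx => ?_
      have hxle : x ≤ i + j := by
        have := Finset.mem_range.mp hx
        omega
      have := bcRec i j x hxle
      calc ((j : ℚ) + 1) ^ 2 * ((Bc i (j + 1) x : ℚ) * Aux k x)
          = (((j : ℚ) + 1) ^ 2 * (Bc i (j + 1) x : ℚ)) * Aux k x := by ring
        _ = ((Bc i j (x - 1) : ℚ) * (x : ℚ) ^ 2
              + ((x : ℚ) ^ 2 + x - (j : ℚ) ^ 2 - j) * Bc i j x) * Aux k x := by rw [this]
        _ = _ := by ring
    rw [hmain, Finset.sum_add_distrib]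
    push_cast
    ring

/-- partial sum: `∑_{k<n} (2s+1) A_s(k) = n C(n+s,s) C(n-1,s)` -/
lemma partialSum (n s : ℕ) :
    ∑ k ∈ Finset.range n, (2 * s + 1) * Aux k s = n * (n + s).choose s * (n - 1).choose s := by
  induction n with
  | zero => simp
  | succ n ih =>
    rw [Finset.sum_range_succ, ih]
    rcases le_or_gt s n with h | h
    · -- n ≥ s
      have i1 : (n + 1) * (n + s + 1).choose s = (n + s + 1) * (n + s).choose s := by
        have := r3 s n
        rw [show s + n + 1 = n + s + 1 from by omega, show s + n = n + s from by omega] at this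
        rw [Nat.mul_comm] at this ⊢
        omega
      have i2 : n * (n - 1).choose s = (n - s) * n.choose s := r2 n s
      have goal' : (n + 1) * (n + 1 + s).choose s * ((n + 1 - 1).choose s)
          = (n + 1) * (n + s + 1).choose s * n.choose s := by
        rw [show n + 1 + s = n + s + 1 from by omega, Nat.add_sub_cancel]
      rw [goal', i1]
      have expand : n * (n + s).choose s * (n - 1).choose s
          = (n + s).choose s * (n * (n - 1).choose s) := by ring
      rw [expand, i2]
      unfold Aux
      have : (n + s + 1) = (n - s) + (2 * s + 1) := by omega
      rw [this]
      ring
    · -- n < s : everything with choose (n, s) vanishes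
      rw [Aux_eq_zero h]
      have h1 : (n - 1).choose s = 0 := Nat.choose_eq_zero_of_lt (by omega)
      have h2 : (n + 1 - 1).choose s = 0 := by
        rw [Nat.add_sub_cancel]
        exact Nat.choose_eq_zero_of_lt h
      rw [h1, h2]
      ring

/-- the inner ℕ sum evaluates by Vandermonde -/
lemma sumT (m s : ℕ) (hsm : s ≤ m) :
    ∑ j ∈ Finset.range (m + 1), (m + 1).choose (j + 1) * (s.choose (m - j) * (m - j).choose (m - s))
      = s.choose (m - s) * (m + 1 + (s - (m - s))).choose (s + 1) := by
  rw [← Finset.sum_range_reflect]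
  have step1 : ∀ j ∈ Finset.range (m + 1),
      (m + 1).choose (m + 1 - 1 - j + 1) * (s.choose (m - (m + 1 - 1 - j)) * (m - (m + 1 - 1 - j)).choose (m - s))
        = (m + 1).choose j * s.choose j * j.choose (m - s) := by
    intro j hj
    have hjm : j ≤ m := by have := Finset.mem_range.mp hj; omega
    rw [show m + 1 - 1 - j = m - j from by omega, show m - (m - j) = j from by omega,
      show m - j + 1 = (m + 1) - j from by omega, Nat.choose_symm (by omega)]
    ring
  rw [Finset.sum_congr rfl step1]
  -- split range at d = m - s
  rw [Finset.range_eq_Ico, ← Finset.sum_Ico_consecutive _ (Nat.zero_le (m - s)) (show m - s ≤ m + 1 by omega)]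
  have hzero : ∑ j ∈ Finset.Ico 0 (m - s), (m + 1).choose j * s.choose j * j.choose (m - s) = 0 := by
    apply Finset.sum_eq_zero
    intro j hj
    have : j < m - s := (Finset.mem_Ico.mp hj).2
    rw [Nat.choose_eq_zero_of_lt this]
    ring
  rw [hzero, zero_add, Finset.sum_Ico_eq_sum_range]
  rw [show m + 1 - (m - s) = s + 1 from by omega]
  have step2 : ∀ v ∈ Finset.range (s + 1),
      (m + 1).choose (m - s + v) * s.choose (m - s + v) * (m - s + v).choose (m - s)
        = s.choose (m - s) * ((m + 1).choose (s + 1 - v) * (s - (m - s)).choose v) := by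
    intro v hv
    have hvs : v ≤ s := by have := Finset.mem_range.mp hv; omega
    have htri := tri s (m - s) v
    have hsymm : (m + 1).choose (m - s + v) = (m + 1).choose (s + 1 - v) := by
      rw [show s + 1 - v = (m + 1) - (m - s + v) from by omega]
      exact (Nat.choose_symm (by omega)).symm
    calc (m + 1).choose (m - s + v) * s.choose (m - s + v) * (m - s + v).choose (m - s)
        = (m + 1).choose (m - s + v) * (s.choose (m - s + v) * (m - s + v).choose (m - s)) := by ring
      _ = (m + 1).choose (m - s + v) * (s.choose (m - s) * (s - (m - s)).choose v) := by
          rw [show m - s + v = (m - s) + v from rfl, htri]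
      _ = s.choose (m - s) * ((m + 1).choose (s + 1 - v) * (s - (m - s)).choose v) := by
          rw [hsymm]; ring
  rw [Finset.sum_congr rfl step2, ← Finset.mul_sum]
  congr 1
  -- Vandermonde
  have hvand := Nat.add_choose_eq (m + 1) (s - (m - s)) (s + 1)
  rw [Finset.Nat.sum_antidiagonal_eq_sum_range_succ_mk] at hvand
  rw [Finset.sum_range_succ' (fun a => (m + 1).choose a * (s - (m - s)).choose (s + 1 - a)) (s + 1)] at hvand
  have hlast : (m + 1).choose 0 * (s - (m - s)).choose (s + 1 - 0) = 0 := by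
    rw [Nat.choose_eq_zero_of_lt (show s - (m - s) < s + 1 - 0 by omega)]
    ring
  rw [hlast, add_zero] at hvand
  rw [← Finset.sum_range_reflect]
  have step3 : ∀ v ∈ Finset.range (s + 1),
      (m + 1).choose (s + 1 - (s + 1 - 1 - v)) * (s - (m - s)).choose (s + 1 - 1 - v)
        = (m + 1).choose (v + 1) * (s - (m - s)).choose (s + 1 - (v + 1)) := by
    intro v hv
    have hvs : v ≤ s := by have := Finset.mem_range.mp hv; omega
    rw [show s + 1 - 1 - v = s - v from by omega, show s + 1 - (s - v) = v + 1 from by omega,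
      show s + 1 - (v + 1) = s - v from by omega]
  rw [Finset.sum_congr rfl step3, ← hvand]

/-- final closed form in ℕ -/
lemma L5e (m s : ℕ) (hsm : s ≤ m) :
    (m + 1) * (s.choose (m - s) * (m + 1 + (s - (m - s))).choose (s + 1))
      = (2 * s + 1) * (2 * s).choose m * (m + 1).choose (s + 1) := by
  rcases le_or_gt m (2 * s) with h | h
  · rw [show m + 1 + (s - (m - s)) = 2 * s + 1 from by omega]
    apply Nat.eq_of_mul_eq_mul_right (show 0 < s + 1 from by omega)
    have e1 : (2 * s + 1).choose (s + 1) * (s + 1) = (2 * s + 1) * (2 * s).choose s := by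
      have := Nat.add_one_mul_choose_eq (2 * s) s
      simpa [Nat.succ_eq_add_one] using this.symm
    have e2 : (2 * s).choose s * s.choose (m - s) = (2 * s).choose m * m.choose s := by
      have := Nat.choose_mul (n := 2 * s) (k := m) (s := s) hsm
      rw [show 2 * s - s = s from by omega] at this
      exact this.symm
    have e3 : (m + 1) * m.choose s = (m + 1).choose (s + 1) * (s + 1) := by
      have := Nat.add_one_mul_choose_eq m s
      simpa [Nat.succ_eq_add_one] using this
    calc (m + 1) * (s.choose (m - s) * (2 * s + 1).choose (s + 1)) * (s + 1)
        = (m + 1) * s.choose (m - s) * ((2 * s + 1).choose (s + 1) * (s + 1)) := by ring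
      _ = (m + 1) * s.choose (m - s) * ((2 * s + 1) * (2 * s).choose s) := by rw [e1]
      _ = (2 * s + 1) * (m + 1) * ((2 * s).choose s * s.choose (m - s)) := by ring
      _ = (2 * s + 1) * (m + 1) * ((2 * s).choose m * m.choose s) := by rw [e2]
      _ = (2 * s + 1) * (2 * s).choose m * ((m + 1) * m.choose s) := by ring
      _ = (2 * s + 1) * (2 * s).choose m * ((m + 1).choose (s + 1) * (s + 1)) := by rw [e3]
      _ = (2 * s + 1) * (2 * s).choose m * (m + 1).choose (s + 1) * (s + 1) := by ring
  · rw [Nat.choose_eq_zero_of_lt (show s < m - s by omega),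
      Nat.choose_eq_zero_of_lt (show 2 * s < m by omega)]
    ring

/-- the weighted coefficient sum -/
lemma sum2L (m s : ℕ) (hsm : s ≤ m) :
    ∑ j ∈ Finset.range (m + 1), (Bc (m - j) j s : ℚ) / (j + 1)
      = (2 * s + 1) * ((2 * s).choose m : ℚ) * ((m + 1).choose (s + 1)) / ((m : ℚ) + 1) ^ 2 := by
  have step1 : ∀ j ∈ Finset.range (m + 1),
      (Bc (m - j) j s : ℚ) / (j + 1)
        = ((m + 1).choose (j + 1) * (s.choose (m - j) * (m - j).choose (m - s)) : ℕ) / ((m : ℚ) + 1) := by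
    intro j hj
    have hjm : j ≤ m := by have := Finset.mem_range.mp hj; omega
    have hBc : Bc (m - j) j s = m.choose j * (s.choose (m - j) * (m - j).choose (m - s)) := by
      unfold Bc
      rw [show m - j + j = m from by omega, Nat.choose_symm (by omega : j ≤ m)]
      ring
    rw [hBc]
    have hmul : ((m : ℚ) + 1) * m.choose j = (m + 1).choose (j + 1) * ((j : ℚ) + 1) := by
      exact_mod_cast congrArg (Nat.cast : ℕ → ℚ) (by
        have := Nat.add_one_mul_choose_eq m j
        simpa [Nat.succ_eq_add_one] using this)
    rw [div_eq_div_iff (by positivity) (by positivity)]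
    push_cast
    push_cast at hmul
    linear_combination ((s.choose (m - j) : ℚ) * ((m - j).choose (m - s) : ℚ)) * hmul
  rw [Finset.sum_congr rfl step1, ← Finset.sum_div, ← Nat.cast_sum]
  rw [sumT m s hsm]
  have := L5e m s hsm
  rw [div_eq_div_iff (by positivity) (by positivity)]
  calc (↑(s.choose (m - s) * (m + 1 + (s - (m - s))).choose (s + 1)) : ℚ) * ((m : ℚ) + 1) ^ 2
      = ((m + 1) * (s.choose (m - s) * (m + 1 + (s - (m - s))).choose (s + 1)) : ℕ) * ((m : ℚ) + 1) := by
        push_cast; ring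
    _ = ((2 * s + 1) * (2 * s).choose m * (m + 1).choose (s + 1) : ℕ) * ((m : ℚ) + 1) := by rw [this]
    _ = (2 * s + 1) * ((2 * s).choose m : ℚ) * ((m + 1).choose (s + 1)) * ((m : ℚ) + 1) := by
        push_cast; ring

/-- regroup a square double sum by anti-diagonals -/
lemma cauchy (F : ℕ → ℕ → ℚ) (N M : ℕ) (hNM : 2 * N ≤ M + 1)
    (hF : ∀ i j, N ≤ i ∨ N ≤ j → F i j = 0) :
    ∑ i ∈ Finset.range N, ∑ j ∈ Finset.range N, F i j
      = ∑ m ∈ Finset.range M, ∑ j ∈ Finset.range (m + 1), F (m - j) j := by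
  have h1 : ∀ m ∈ Finset.range M,
      ∑ j ∈ Finset.range (m + 1), F (m - j) j
        = ∑ j ∈ Finset.range M, if j ≤ m then F (m - j) j else 0 := by
    intro m hm
    have hmM : m + 1 ≤ M := by have := Finset.mem_range.mp hm; omega
    rw [← Finset.sum_subset (Finset.range_subset_range.mpr hmM)
      (fun j _ hj => if_neg (by have := Finset.mem_range.not.mp hj; omega))]
    exact Finset.sum_congr rfl fun j hj => (if_pos (by have := Finset.mem_range.mp hj; omega)).symm
  have h2 : ∀ j ∈ Finset.range M,
      (∑ m ∈ Finset.range M, if j ≤ m then F (m - j) j else 0) = ∑ i ∈ Finset.range N, F i j := by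
    intro j hj
    have hjM : j ≤ M := by have := Finset.mem_range.mp hj; omega
    conv_lhs => rw [Finset.range_eq_Ico, ← Finset.sum_Ico_consecutive _ (Nat.zero_le j) hjM]
    have hz : ∑ m ∈ Finset.Ico 0 j, (if j ≤ m then F (m - j) j else 0) = 0 :=
      Finset.sum_eq_zero fun m hm => if_neg (by have := (Finset.mem_Ico.mp hm).2; omega)
    rw [hz, zero_add]
    have hp : ∀ m ∈ Finset.Ico j M, (if j ≤ m then F (m - j) j else 0) = F (m - j) j :=
      fun m hm => if_pos (Finset.mem_Ico.mp hm).1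
    rw [Finset.sum_congr rfl hp, Finset.sum_Ico_eq_sum_range]
    have hsimp : ∀ i ∈ Finset.range (M - j), F (j + i - j) j = F i j := by
      intro i _
      rw [Nat.add_sub_cancel_left]
    rw [Finset.sum_congr rfl hsimp]
    rcases le_or_gt N j with hNj | hNj
    · rw [Finset.sum_eq_zero fun i _ => hF i j (Or.inr hNj),
        Finset.sum_eq_zero fun i _ => hF i j (Or.inr hNj)]
    · exact (Finset.sum_subset (Finset.range_subset_range.mpr (show N ≤ M - j by omega))
        (fun i _ hi => hF i j (Or.inl (by have := Finset.mem_range.not.mp hi; omega)))).symm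
  calc ∑ i ∈ Finset.range N, ∑ j ∈ Finset.range N, F i j
      = ∑ i ∈ Finset.range N, ∑ j ∈ Finset.range M, F i j :=
        Finset.sum_congr rfl fun i _ =>
          Finset.sum_subset (Finset.range_subset_range.mpr (show N ≤ M by omega))
            (fun j _ hj => hF i j (Or.inr (by have := Finset.mem_range.not.mp hj; omega)))
    _ = ∑ j ∈ Finset.range M, ∑ i ∈ Finset.range N, F i j := Finset.sum_comm
    _ = ∑ j ∈ Finset.range M, ∑ m ∈ Finset.range M, (if j ≤ m then F (m - j) j else 0) :=
        Finset.sum_congr rfl fun j hj => (h2 j hj).symm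
    _ = ∑ m ∈ Finset.range M, ∑ j ∈ Finset.range M, (if j ≤ m then F (m - j) j else 0) :=
        Finset.sum_comm
    _ = ∑ m ∈ Finset.range M, ∑ j ∈ Finset.range (m + 1), F (m - j) j :=
        Finset.sum_congr rfl fun m hm => (h1 m hm).symm


end AuxLemmas

/-- the key per-`k` identity -/
lemma core (k : ℕ) (x : ℚ) :
    Dpoly k x * Spoly k x
      = ∑ m ∈ Finset.range (2 * k + 1), ∑ s ∈ Finset.range (m + 1),
          (2 * s + 1) * ((2 * s).choose m : ℚ) * ((m + 1).choose (s + 1)) * (Aux k s)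
            * x ^ m / ((m : ℚ) + 1) ^ 2 := by
  have hD : Dpoly k x = ∑ i ∈ Finset.range (k + 1), (Aux k i : ℚ) * x ^ i := by
    unfold Dpoly Aux
    exact Finset.sum_congr rfl fun i _ => by push_cast; rfl
  have hS : Spoly k x = ∑ j ∈ Finset.range (k + 1), (Aux k j : ℚ) * x ^ j / ((j : ℚ) + 1) := by
    unfold Spoly Aux
    exact Finset.sum_congr rfl fun j _ => by push_cast; rfl
  rw [hD, hS, Finset.sum_mul_sum]
  have hstep : ∑ i ∈ Finset.range (k + 1), ∑ j ∈ Finset.range (k + 1),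
        ((Aux k i : ℚ) * x ^ i) * ((Aux k j : ℚ) * x ^ j / ((j : ℚ) + 1))
      = ∑ i ∈ Finset.range (k + 1), ∑ j ∈ Finset.range (k + 1),
        (fun i j => (Aux k i : ℚ) * Aux k j * x ^ (i + j) / ((j : ℚ) + 1)) i j :=
    Finset.sum_congr rfl fun i _ => Finset.sum_congr rfl fun j _ => by
      show _ = (Aux k i : ℚ) * Aux k j * x ^ (i + j) / ((j : ℚ) + 1)
      rw [pow_add]; ring
  rw [hstep, cauchy _ (k + 1) (2 * k + 1) (by omega)
    (fun i j hij => by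
      rcases hij with h | h
      · rw [Aux_eq_zero (show k < i by omega)]; push_cast; ring
      · rw [Aux_eq_zero (show k < j by omega)]; push_cast; ring)]
  refine Finset.sum_congr rfl fun m _ => ?_
  have hinner : ∀ j ∈ Finset.range (m + 1),
      (Aux k (m - j) : ℚ) * Aux k j * x ^ (m - j + j) / ((j : ℚ) + 1)
        = ∑ s ∈ Finset.range (m + 1), (Bc (m - j) j s : ℚ) * Aux k s * x ^ m / ((j : ℚ) + 1) := by
    intro j hj
    have hjm : j ≤ m := by have := Finset.mem_range.mp hj; omega
    have hmj : m - j + j = m := by omega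
    rw [hmj, linB k (m - j) j, hmj, Finset.sum_mul, Finset.sum_div]
  rw [Finset.sum_congr rfl hinner, Finset.sum_comm]
  refine Finset.sum_congr rfl fun s hs => ?_
  have hsm : s ≤ m := by have := Finset.mem_range.mp hs; omega
  have hfact : ∑ j ∈ Finset.range (m + 1), (Bc (m - j) j s : ℚ) * Aux k s * x ^ m / ((j : ℚ) + 1)
      = (∑ j ∈ Finset.range (m + 1), (Bc (m - j) j s : ℚ) / ((j : ℚ) + 1))
          * ((Aux k s : ℚ) * x ^ m) := by
    rw [Finset.sum_mul]
    exact Finset.sum_congr rfl fun j _ => by ring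
  rw [hfact, sum2L m s hsm]
  ring

theorem sum_Dpoly_mul_Spoly_eq (p : ℕ) (hp : p.Prime) (hodd : Odd p) (x : ℤ) :
    ∑ k ∈ Finset.range p, Dpoly k (x : ℚ) * Spoly k (x : ℚ)
      = (p : ℚ) * ∑ m ∈ Finset.range (2 * p - 1), ∑ s ∈ Finset.range p,
          ((2 * s).choose m : ℚ) * ((m + 1).choose (s + 1) : ℚ) * ((p + s).choose s : ℚ)
            * ((p - 1).choose s : ℚ) * (x : ℚ) ^ m / (m + 1) ^ 2 := by
  have hp1 : 1 ≤ p := hp.pos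
  have hstep1 : ∑ k ∈ Finset.range p, Dpoly k (x : ℚ) * Spoly k (x : ℚ)
      = ∑ k ∈ Finset.range p, ∑ m ∈ Finset.range (2 * p - 1), ∑ s ∈ Finset.range p,
          (2 * s + 1) * ((2 * s).choose m : ℚ) * ((m + 1).choose (s + 1)) * (Aux k s)
            * (x : ℚ) ^ m / ((m : ℚ) + 1) ^ 2 := by
    refine Finset.sum_congr rfl fun k hk => ?_
    have hkp : k < p := Finset.mem_range.mp hk
    rw [core k (x : ℚ)]
    have hinner : ∀ m : ℕ,
        ∑ s ∈ Finset.range (m + 1),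
            (2 * s + 1) * ((2 * s).choose m : ℚ) * ((m + 1).choose (s + 1)) * (Aux k s)
              * (x : ℚ) ^ m / ((m : ℚ) + 1) ^ 2
          = ∑ s ∈ Finset.range p,
            (2 * s + 1) * ((2 * s).choose m : ℚ) * ((m + 1).choose (s + 1)) * (Aux k s)
              * (x : ℚ) ^ m / ((m : ℚ) + 1) ^ 2 := by
      intro m
      have h1 := Finset.sum_subset (f := fun s =>
          (2 * s + 1) * ((2 * s).choose m : ℚ) * ((m + 1).choose (s + 1)) * (Aux k s)
            * (x : ℚ) ^ m / ((m : ℚ) + 1) ^ 2)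
        (Finset.range_subset_range.mpr (show m + 1 ≤ m + 1 + p by omega))
        (fun s _ hs => by
          have hms : m + 1 ≤ s := by have := Finset.mem_range.not.mp hs; omega
          simp [Nat.choose_eq_zero_of_lt (show m + 1 < s + 1 by omega)])
      have h2 := Finset.sum_subset (f := fun s =>
          (2 * s + 1) * ((2 * s).choose m : ℚ) * ((m + 1).choose (s + 1)) * (Aux k s)
            * (x : ℚ) ^ m / ((m : ℚ) + 1) ^ 2)
        (Finset.range_subset_range.mpr (show p ≤ m + 1 + p by omega))
        (fun s _ hs => by
          have hps : p ≤ s := by have := Finset.mem_range.not.mp hs; omega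
          simp [Aux_eq_zero (show k < s by omega)])
      exact h1.trans h2.symm
    rw [Finset.sum_congr rfl fun m _ => hinner m]
    refine Finset.sum_subset (Finset.range_subset_range.mpr (show 2 * k + 1 ≤ 2 * p - 1 by omega))
      (fun m _ hm => ?_)
    have hmk : 2 * k + 1 ≤ m := by have := Finset.mem_range.not.mp hm; omega
    refine Finset.sum_eq_zero fun s _ => ?_
    rcases le_or_gt s k with hsk | hsk
    · rw [Nat.choose_eq_zero_of_lt (show 2 * s < m by omega)]
      push_cast
      ring
    · rw [Aux_eq_zero hsk]
      push_cast
      ring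
  rw [hstep1, Finset.sum_comm]
  rw [Finset.mul_sum]
  refine Finset.sum_congr rfl fun m _ => ?_
  rw [Finset.sum_comm, Finset.mul_sum]
  refine Finset.sum_congr rfl fun s _ => ?_
  have hps := partialSum p s
  have hcast : ((∑ k ∈ Finset.range p, (2 * s + 1) * Aux k s : ℕ) : ℚ)
      = ((p * (p + s).choose s * (p - 1).choose s : ℕ) : ℚ) := by rw [hps]
  push_cast at hcast
  have hfact : ∑ k ∈ Finset.range p,
      (2 * s + 1) * ((2 * s).choose m : ℚ) * ((m + 1).choose (s + 1)) * (Aux k s)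
        * (x : ℚ) ^ m / ((m : ℚ) + 1) ^ 2
    = (((2 * s).choose m : ℚ) * ((m + 1).choose (s + 1)) * (x : ℚ) ^ m / ((m : ℚ) + 1) ^ 2)
        * ∑ k ∈ Finset.range p, ((2 * (s : ℚ) + 1) * (Aux k s : ℚ)) := by
    rw [Finset.mul_sum]
    exact Finset.sum_congr rfl fun k _ => by push_cast; ring
  rw [hfact]
  rw [show ∑ k ∈ Finset.range p, ((2 * (s : ℚ) + 1) * (Aux k s : ℚ))
      = (p : ℚ) * ((p + s).choose s : ℚ) * ((p - 1).choose s : ℚ) from by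
    rw [← hcast]]
  push_cast
  ring
end

section
/- Let p be an odd prime. Then p^2·∑_{k=1}^{p−1} (−1)^k/k^2 ≡ −p^3·∑_{k=1}^{p−1} (−1)^k/k^3 (mod p^4), as a congruence of rational numbers. -/
open Finset

theorem alternating_harmonic_two_three (p : ℕ) (hp : p.Prime) (hodd : Odd p) :
    padicNorm p ((p : ℚ) ^ 2 * (∑ k ∈ Finset.Icc 1 (p - 1), (-1 : ℚ) ^ k / (k : ℚ) ^ 2)
        - (-(p : ℚ) ^ 3 * ∑ k ∈ Finset.Icc 1 (p - 1), (-1 : ℚ) ^ k / (k : ℚ) ^ 3))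
      ≤ (p : ℚ) ^ (-4 : ℤ) := by
  haveI : Fact p.Prime := ⟨hp⟩
  have hp2 : 2 ≤ p := hp.two_le
  have hpne2 : p ≠ 2 := by rintro rfl; exact absurd hodd (by decide)
  have hp3 : 3 ≤ p := by omega
  have hp1Q : (1:ℚ) < p := by exact_mod_cast hp.one_lt
  have hp0Q : (0:ℚ) < p := by positivity
  -- general pow lemma for padicNorm
  have hpow : ∀ (x : ℚ) (n : ℕ), padicNorm p (x ^ n) = padicNorm p x ^ n := by
    intro x n
    induction n with
    | zero => simp [padicNorm.one]
    | succ n ih => rw [pow_succ, padicNorm.mul, ih, pow_succ]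
  have hpp : padicNorm p (p : ℚ) = (p:ℚ)⁻¹ := padicNorm.padicNorm_p hp.one_lt
  set f : ℕ → ℚ := fun k => (-1:ℚ)^k * (((k:ℚ) + p) / (k:ℚ)^3) with hf
  set T := ∑ k ∈ Finset.Icc 1 (p-1), f k with hTdef
  -- Step 1: rewrite the expression
  have hrw : (p : ℚ) ^ 2 * (∑ k ∈ Finset.Icc 1 (p - 1), (-1 : ℚ) ^ k / (k : ℚ) ^ 2)
        - (-(p : ℚ) ^ 3 * ∑ k ∈ Finset.Icc 1 (p - 1), (-1 : ℚ) ^ k / (k : ℚ) ^ 3)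
      = (p:ℚ)^2 * T := by
    rw [hTdef, Finset.mul_sum, Finset.mul_sum, Finset.mul_sum, ← Finset.sum_sub_distrib]
    refine Finset.sum_congr rfl fun k hk => ?_
    obtain ⟨hk1, hk2⟩ := Finset.mem_Icc.mp hk
    have hk0 : (k:ℚ) ≠ 0 := Nat.cast_ne_zero.mpr (by omega)
    have hsplit : ((k:ℚ) + p) / (k:ℚ)^3 = 1/(k:ℚ)^2 + (p:ℚ)/(k:ℚ)^3 := by
      field_simp
    simp only [hf]
    rw [hsplit]
    field_simp
    ring
  -- Step 2: pair bound
  have hpair : ∀ k ∈ Finset.Icc 1 (p-1),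
      padicNorm p (f k + f (p - k)) ≤ ((p:ℚ)⁻¹)^3 := by
    intro k hk
    obtain ⟨hk1, hk2⟩ := Finset.mem_Icc.mp hk
    have hkp : k < p := by omega
    have hkle : k ≤ p := hkp.le
    have hcast : ((p - k : ℕ) : ℚ) = (p:ℚ) - k := by
      exact Nat.cast_sub hkle
    have hk0 : (k:ℚ) ≠ 0 := Nat.cast_ne_zero.mpr (by omega)
    have hpk0 : (p:ℚ) - (k:ℚ) ≠ 0 := by
      rw [← hcast]; exact Nat.cast_ne_zero.mpr (by omega)
    have hsign : (-1:ℚ)^(p - k) = -(-1:ℚ)^k := by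
      rcases Nat.even_or_odd k with he | ho
      · rw [(Nat.Odd.sub_even hkle hodd he).neg_one_pow, he.neg_one_pow]
      · rw [(Nat.Odd.sub_odd hodd ho).neg_one_pow, ho.neg_one_pow]; norm_num
    have hid : f k + f (p - k)
        = (-1:ℚ)^k * ((p:ℚ)^3 * (((p:ℚ) - 2*k) / ((k:ℚ)^3 * ((p:ℚ) - k)^3))) := by
      simp only [hf, hcast, hsign]
      field_simp
      ring
    have hnormk : padicNorm p ((k:ℚ)) = 1 :=
      (padicNorm.nat_eq_one_iff k).mpr (fun h => by
        have := Nat.le_of_dvd (by omega) h; omega)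
    have hnormpk : padicNorm p ((p:ℚ) - k) = 1 := by
      rw [← hcast]
      exact (padicNorm.nat_eq_one_iff (p - k)).mpr (fun h => by
        have := Nat.le_of_dvd (by omega) h; omega)
    have hnum : padicNorm p ((p:ℚ) - 2*k) ≤ 1 := by
      have : ((p:ℚ) - 2*k) = (((p:ℤ) - 2*k : ℤ) : ℚ) := by push_cast; ring
      rw [this]; exact padicNorm.of_int _
    have hεnorm : padicNorm p (f k + f (p - k))
        = padicNorm p ((p:ℚ)^3 * (((p:ℚ) - 2*k) / ((k:ℚ)^3 * ((p:ℚ) - k)^3))) := by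
      rw [hid]
      rcases Nat.even_or_odd k with he | ho
      · rw [he.neg_one_pow, one_mul]
      · rw [ho.neg_one_pow, neg_one_mul, padicNorm.neg]
    rw [hεnorm, padicNorm.mul, hpow, hpp, padicNorm.div, padicNorm.mul, hpow, hpow,
      hnormk, hnormpk]
    have h1 : padicNorm p ((p:ℚ) - 2*k) / (1^3 * 1^3) ≤ 1 := by simpa using hnum
    calc ((p:ℚ)⁻¹)^3 * (padicNorm p ((p:ℚ) - 2*k) / (1^3 * 1^3))
        ≤ ((p:ℚ)⁻¹)^3 * 1 := by
          refine mul_le_mul_of_nonneg_left h1 (by positivity)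
      _ = ((p:ℚ)⁻¹)^3 := by ring
  -- Step 3: reindex
  have hre : ∑ k ∈ Finset.Icc 1 (p-1), f (p - k) = T := by
    rw [hTdef]
    refine Finset.sum_nbij' (fun k => p - k) (fun k => p - k) ?_ ?_ ?_ ?_ ?_
    · intro a ha; simp only [Finset.mem_Icc] at ha ⊢; omega
    · intro a ha; simp only [Finset.mem_Icc] at ha ⊢; omega
    · intro a ha; simp only [Finset.mem_Icc] at ha; omega
    · intro a ha; simp only [Finset.mem_Icc] at ha; omega
    · intro a ha; rfl
  have h2T : 2 * T = ∑ k ∈ Finset.Icc 1 (p-1), (f k + f (p - k)) := by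
    rw [Finset.sum_add_distrib, hre]; ring
  have hnorm2 : padicNorm p 2 = 1 := by
    have : ((2:ℕ):ℚ) = (2:ℚ) := by norm_num
    rw [← this]
    exact (padicNorm.nat_eq_one_iff 2).mpr (fun h => by
      have := Nat.le_of_dvd (by omega) h; omega)
  have hTbound : padicNorm p T ≤ ((p:ℚ)⁻¹)^3 := by
    have : padicNorm p T = padicNorm p (2 * T) := by
      rw [padicNorm.mul, hnorm2, one_mul]
    rw [this, h2T]
    exact padicNorm.sum_le' hpair (by positivity)
  rw [hrw, padicNorm.mul, hpow, hpp]
  calc ((p:ℚ)⁻¹)^2 * padicNorm p T ≤ ((p:ℚ)⁻¹)^2 * ((p:ℚ)⁻¹)^3 :=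
        mul_le_mul_of_nonneg_left hTbound (by positivity)
    _ = ((p:ℚ)⁻¹)^5 := by ring
    _ ≤ ((p:ℚ)⁻¹)^4 := by
        refine pow_le_pow_of_le_one (by positivity) ?_ (by omega)
        rw [inv_le_one_iff₀]; right; exact hp1Q.le
    _ = (p:ℚ) ^ (-4:ℤ) := by
        rw [inv_pow, ← zpow_natCast (p:ℚ) 4, ← zpow_neg]
        norm_num
end
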